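/- arXiv:1211.1319 — 6 statements merged into one kernel-verified Lean document; each statement's English description precedes it below -/
import Mathlib

section
/- Let G be a finite simple undirected graph with edge set E, and let ¬𝕊_cyc be the system of all acyclic orientations of G. Then every X ⊆ E all of whose edges are bridges of G satisfies X ∈ sstr(¬𝕊_cyc); equivalently, every X ∈ str(𝕊_cyc) satisfies that E−X intersects some cycle of G, where 𝕊_cyc is the system of orientations containing a directed cycle. -/
/-- `𝕊` shatters `Y ⊆ X`: for every `f ∈ {0,1}^Y` there is `g ∈ {0,1}^{X−Y}` with `g⋆f ∈ S`;
equivalently, every `f : α → Bool` agrees on `Y` with some member of `S`. -/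
def Shatters {α : Type*} (S : Set (α → Bool)) (Y : Set α) : Prop :=
  ∀ f : α → Bool, ∃ h ∈ S, Set.EqOn h f Y

/-- `𝕊` strongly shatters `Y ⊆ X`: there is `g ∈ {0,1}^{X−Y}` such that for every
`f ∈ {0,1}^Y`, `g⋆f ∈ S` (here `g⋆f` is expressed as the member `h` of `S` agreeing
with `f` on `Y` and with `g` on `Yᶜ`). -/
def StronglyShatters {α : Type*} (S : Set (α → Bool)) (Y : Set α) : Prop :=
  ∃ g : α → Bool, ∀ f : α → Bool, ∃ h ∈ S, Set.EqOn h f Y ∧ Set.EqOn h g Yᶜ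

/-- The family of sets shattered by the system. -/
def str {α : Type*} (S : Set (α → Bool)) : Set (Set α) :=
  {Y | Shatters S Y}

/-- The family of sets strongly shattered by the system. -/
def sstr {α : Type*} (S : Set (α → Bool)) : Set (Set α) :=
  {Y | StronglyShatters S Y}


/-- The arc relation of the digraph obtained by orienting the edges of `X ⊆ E(G)`
according to `d` (relative to the reference orientation `ρ`): `d e = false` keeps
the reference direction `(ρ e).1 → (ρ e).2`, `d e = true` reverses it. -/
def arcsOn {V : Type*} (G : SimpleGraph V) (ρ : Sym2 V → V × V)
    (X : Set G.edgeSet) (d : G.edgeSet → Bool) : V → V → Prop :=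
  fun u v => ∃ e : G.edgeSet, e ∈ X ∧
    ((d e = false ∧ ρ e.val = (u, v)) ∨ (d e = true ∧ ρ e.val = (v, u)))

/-- The arc relation of the digraph `G⃗^d` obtained by orienting all edges of `G`
according to `d`. -/
def arcs {V : Type*} (G : SimpleGraph V) (ρ : Sym2 V → V × V)
    (d : G.edgeSet → Bool) : V → V → Prop :=
  arcsOn G ρ Set.univ d

/-- A digraph contains a directed cycle iff some vertex lies on a closed directed
walk of positive length. -/
def HasDiCycle {V : Type*} (R : V → V → Prop) : Prop :=
  ∃ v, Relation.TransGen R v v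

/-- The subgraph `G_X` of `G` on the full vertex set, with edge set `X ⊆ E(G)`. -/
def subgraphOf {V : Type*} (G : SimpleGraph V) (X : Set G.edgeSet) : SimpleGraph V :=
  SimpleGraph.fromEdgeSet (Subtype.val '' X)


section Aux

open SimpleGraph

variable {V : Type*} [Fintype V] (G : SimpleGraph V) (ρ : Sym2 V → V × V)

/-- rank of a vertex -/
noncomputable def rkv (v : V) : ℕ := (Fintype.equivFin V v : ℕ)

/-- the reference "increasing rank" orientation -/
noncomputable def rOrient : G.edgeSet → Bool :=
  fun e => decide (rkv (ρ e.val).2 < rkv (ρ e.val).1)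

/-- head of the arc of edge `e` under orientation `d` -/
def eHead (d : G.edgeSet → Bool) (e : G.edgeSet) : V :=
  if d e = true then (ρ e.val).1 else (ρ e.val).2

/-- tail of the arc of edge `e` under orientation `d` -/
def eTail (d : G.edgeSet → Bool) (e : G.edgeSet) : V :=
  if d e = true then (ρ e.val).2 else (ρ e.val).1

lemma core_acyclic (hρ : ∀ e ∈ G.edgeSet, Sym2.mk (ρ e).1 (ρ e).2 = e)
    (B : Set G.edgeSet)
    (hB : ∀ e ∈ B, ∀ (v : V) (p : G.Walk v v), p.IsCycle → (e : Sym2 V) ∉ p.edges)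
    (d : G.edgeSet → Bool)
    (hd : ∀ e : G.edgeSet, e ∉ B → d e = rOrient G ρ e) :
    ¬ HasDiCycle (arcs G ρ d) := by
  classical
  haveI : Fintype G.edgeSet := Fintype.ofFinite _
  set n : ℕ := Fintype.card V with hn
  -- indicator weight
  set W : G.edgeSet → V → ℕ := fun e v =>
    if e ∈ B ∧ (G.deleteEdges {e.val}).Reachable (eHead G ρ d e) v then 1 else 0 with hW
  set Φ : V → ℕ := fun v => rkv v + n * ∑ e : G.edgeSet, W e v with hΦ
  have hrk_lt : ∀ v : V, rkv v < n := fun v => (Fintype.equivFin V v).is_lt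
  have hrk_inj : Function.Injective (rkv (V := V)) := by
    intro a b hab
    exact (Fintype.equivFin V).injective (Fin.ext hab)
  have hmk : ∀ e : G.edgeSet, s(eTail G ρ d e, eHead G ρ d e) = e.val := by
    intro e
    by_cases hde : d e = true <;>
      simp only [eTail, eHead, hde, if_true, if_false, Bool.false_eq_true]
    · exact Sym2.eq_swap.trans (hρ e.val e.prop)
    · exact hρ e.val e.prop
  have hadj : ∀ e : G.edgeSet, G.Adj (eTail G ρ d e) (eHead G ρ d e) := by
    intro e
    rw [← SimpleGraph.mem_edgeSet, hmk e]
    exact e.prop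
  have harc : ∀ u v, arcs G ρ d u v → ∃ e : G.edgeSet,
      eTail G ρ d e = u ∧ eHead G ρ d e = v := by
    rintro u v ⟨e, -, ⟨hde, hpe⟩ | ⟨hde, hpe⟩⟩ <;>
      exact ⟨e, by simp [eTail, eHead, hde, hpe]⟩
  -- weights don't change along arcs of other edges
  have hWne : ∀ e e' : G.edgeSet, e' ≠ e →
      W e' (eTail G ρ d e) = W e' (eHead G ρ d e) := by
    intro e e' hne
    have hreach : (G.deleteEdges {e'.val}).Reachable (eTail G ρ d e) (eHead G ρ d e) := by
      refine SimpleGraph.Adj.reachable ?_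
      rw [SimpleGraph.deleteEdges_adj]
      refine ⟨hadj e, ?_⟩
      rw [hmk e]
      simpa using (Subtype.coe_injective.ne hne).symm
    by_cases hb : e' ∈ B
    · have hiff : (G.deleteEdges {e'.val}).Reachable (eHead G ρ d e') (eTail G ρ d e) ↔
          (G.deleteEdges {e'.val}).Reachable (eHead G ρ d e') (eHead G ρ d e) :=
        ⟨fun h => h.trans hreach, fun h => h.trans hreach.symm⟩
      simp only [hW, hb, true_and]
      rw [if_congr hiff rfl rfl]
    · simp [hW, hb]
  -- Φ strictly increases along each arc
  have key : ∀ u v, arcs G ρ d u v → Φ u < Φ v := by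
    intro u v h
    obtain ⟨e, rfl, rfl⟩ := harc u v h
    by_cases hb : e ∈ B
    · -- bridge edge: weight of e jumps from 0 to 1
      have hW1 : W e (eHead G ρ d e) = 1 := by
        simp [hW, hb, SimpleGraph.Reachable.refl]
      have hW0 : W e (eTail G ρ d e) = 0 := by
        have hbr : G.IsBridge e.val :=
          (SimpleGraph.isBridge_iff_forall_cycle_notMem e.prop).mpr (hB e hb)
        rw [← hmk e] at hbr
        have hnr := (SimpleGraph.isBridge_iff.mp hbr)
        have hdel : G.deleteEdges {(e : Sym2 V)} =
            G \ SimpleGraph.fromEdgeSet {s(eTail G ρ d e, eHead G ρ d e)} := by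
          rw [hmk e]; rfl
        simp only [hW, hb, true_and]
        rw [if_neg]
        intro hcon
        exact hnr (by rw [hdel] at hcon; exact hcon.symm)
      have hsum : ∑ e' : G.edgeSet, W e' (eHead G ρ d e) =
          (∑ e' : G.edgeSet, W e' (eTail G ρ d e)) + 1 := by
        rw [← Finset.add_sum_erase _ _ (Finset.mem_univ e),
            ← Finset.add_sum_erase _ (fun e' => W e' (eTail G ρ d e)) (Finset.mem_univ e),
            hW0, hW1]
        rw [Finset.sum_congr rfl (fun e' he' => (hWne e e' (Finset.ne_of_mem_erase he')).symm)]
        omega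
      have h1 := hrk_lt (eTail G ρ d e)
      simp only [hΦ, hsum, Nat.mul_add, Nat.mul_one]
      omega
    · -- non-bridge edge: rank increases, weights unchanged
      have hsum : ∑ e' : G.edgeSet, W e' (eTail G ρ d e) =
          ∑ e' : G.edgeSet, W e' (eHead G ρ d e) := by
        refine Finset.sum_congr rfl fun e' _ => ?_
        by_cases he' : e' = e
        · subst he'; simp [hW, hb]
        · exact hWne e e' he'
      have hrlt : rkv (eTail G ρ d e) < rkv (eHead G ρ d e) := by
        have hde := hd e hb
        have hne : rkv (eTail G ρ d e) ≠ rkv (eHead G ρ d e) :=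
          fun hcon => (hadj e).ne (hrk_inj hcon)
        by_cases hdt : d e = true
        · have : rkv (ρ e.val).2 < rkv (ρ e.val).1 := by
            rw [hdt] at hde
            exact of_decide_eq_true hde.symm
          simpa [eTail, eHead, hdt] using this
        · have hfalse : d e = false := by
            cases hdd : d e
            · rfl
            · exact absurd hdd hdt
          have : ¬ (rkv (ρ e.val).2 < rkv (ρ e.val).1) := by
            rw [hfalse] at hde
            exact of_decide_eq_false hde.symm
          have hle : rkv (ρ e.val).1 ≤ rkv (ρ e.val).2 := Nat.le_of_not_lt this
          simp only [eTail, eHead, hfalse, Bool.false_eq_true, if_false] at hne ⊢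
          omega
      simp only [hΦ, hsum]
      omega
  rintro ⟨v, hv⟩
  have mono : ∀ a b, Relation.TransGen (arcs G ρ d) a b → Φ a < Φ b := by
    intro a b hab
    induction hab with
    | single h => exact key _ _ h
    | tail _ h ih => exact ih.trans (key _ _ h)
  exact lt_irrefl _ (mono v v hv)

end Aux

/-- every `X ⊆ E` all of whose edges are bridges (edges lying on no cycle
of `G`) is strongly shattered by the system of acyclic orientations; equivalently, for
every `X` shattered by the system `𝕊_cyc` of cyclic orientations, `E − X` meets some
cycle of `G`. -/
theorem bridges_sstr_acyclic {V : Type*} [Fintype V] (G : SimpleGraph V)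
    (ρ : Sym2 V → V × V) (hρ : ∀ e ∈ G.edgeSet, Sym2.mk (ρ e).1 (ρ e).2 = e) :
    (∀ X : Set G.edgeSet,
      (∀ e ∈ X, ∀ (v : V) (p : G.Walk v v), p.IsCycle → (e : Sym2 V) ∉ p.edges) →
      X ∈ sstr ({d : G.edgeSet → Bool | HasDiCycle (arcs G ρ d)}ᶜ)) ∧
    (∀ X : Set G.edgeSet,
      X ∈ str {d : G.edgeSet → Bool | HasDiCycle (arcs G ρ d)} →
      ∃ (v : V) (p : G.Walk v v), p.IsCycle ∧
        ∃ e : G.edgeSet, e ∉ X ∧ (e : Sym2 V) ∈ p.edges) := by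

  classical
  constructor
  · -- part 1
    intro X hX
    refine ⟨rOrient G ρ, fun f => ?_⟩
    refine ⟨fun e => if e ∈ X then f e else rOrient G ρ e, ?_, ?_, ?_⟩
    · exact core_acyclic G ρ hρ X hX _ (fun e he => by simp [he])
    · intro e he; simp [he]
    · intro e he; simp [show e ∉ X from he]
  · -- part 2
    intro X hstr
    by_contra hc
    push_neg at hc
    obtain ⟨h, hmem, heq⟩ := hstr (rOrient G ρ)
    refine core_acyclic G ρ hρ Xᶜ ?_ h ?_ hmem
    · intro e he v p hp hmem'
      exact hc v p hp e he hmem'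
    · intro e he
      exact heq (Set.notMem_compl_iff.mp he)
end

section
/- (General inequality) Let G be a finite simple undirected graph with edge set E. Let P be a predicate on digraphs on the vertex set V of G that is monotone increasing (if a digraph satisfies P then so does any digraph obtained from it by adding arcs), and let P' be a predicate on edge subsets of G such that whenever P'(X) holds for X ⊆ E there exists an orientation d_X of the edges of X for which the digraph (G_X)⃗^{d_X} satisfies P. Then the number of edge subsets X ⊆ E satisfying P' is at most the number of orientations d of G such that G⃗^d satisfies P. -/
/-- Key combinatorial lemma: a family of subcubes of the Boolean cube, indexed by
distinct "fixing sets" (one subcube per fixing set), has union at least as large as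
the number of subcubes. -/
lemma cube_lemma {α : Type*} [Finite α] (F : Finset α) :
    ∀ (T : Set (Set α)) (σ : Set α → α → Bool) (c : α → Bool),
    (∀ X ∈ T, ∀ e ∈ X, e ∈ F) →
    T.ncard ≤ {d : α → Bool | (∃ X ∈ T, ∀ e ∈ X, d e = σ X e) ∧
      ∀ e ∉ F, d e = c e}.ncard := by
  classical
  induction F using Finset.induction with
  | empty =>
    intro T σ c hT
    rcases T.eq_empty_or_nonempty with h | ⟨X0, hX0⟩
    · simp [h]
    · have hsub : T ⊆ {∅} := by
        intro X hX
        have : X = ∅ := Set.eq_empty_iff_forall_notMem.2 fun e he => by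
          simpa using hT X hX e he
        simp [this]
      calc T.ncard ≤ ({∅} : Set (Set α)).ncard :=
            Set.ncard_le_ncard hsub (Set.finite_singleton _)
        _ = 1 := Set.ncard_singleton _
        _ ≤ _ := by
            rw [Nat.one_le_iff_ne_zero, ← Nat.pos_iff_ne_zero]
            refine (Set.ncard_pos (Set.toFinite _)).2 ⟨c, ?_, fun e he => rfl⟩
            exact ⟨X0, hX0, fun e he => absurd (hT X0 hX0 e he) (by simp)⟩
  | @insert a F' ha ih =>
    intro T σ c hT
    set s : Set α → Bool := fun X =>
      if a ∈ X then σ X a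
      else if insert a X ∈ T then !(σ (insert a X) a) else true with hs
    have hsa : ∀ X, a ∈ X → s X = σ X a := by
      intro X h; simp only [hs]; rw [if_pos h]
    have hsn : ∀ X, a ∉ X → insert a X ∈ T → s X = !(σ (insert a X) a) := by
      intro X h h'; simp only [hs]; rw [if_neg h, if_pos h']
    set Tb : Bool → Set (Set α) := fun b => (fun X => X \ {a}) '' {X ∈ T | s X = b} with hTb
    set σb : Bool → Set α → α → Bool := fun b Y =>
      if insert a Y ∈ T ∧ σ (insert a Y) a = b then σ (insert a Y) else σ Y with hσb
    have hσb1 : ∀ b Y, insert a Y ∈ T → σ (insert a Y) a = b →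
        σb b Y = σ (insert a Y) := by
      intro b Y h h'; simp only [hσb]; rw [if_pos ⟨h, h'⟩]
    have hσb2 : ∀ b Y, ¬(insert a Y ∈ T ∧ σ (insert a Y) a = b) → σb b Y = σ Y := by
      intro b Y h; simp only [hσb]; rw [if_neg h]
    set U : Set (α → Bool) := {d : α → Bool | (∃ X ∈ T, ∀ e ∈ X, d e = σ X e) ∧
      ∀ e ∉ insert a F', d e = c e} with hU
    set Ub : Bool → Set (α → Bool) := fun b =>
      {d : α → Bool | (∃ Y ∈ Tb b, ∀ e ∈ Y, d e = σb b Y e) ∧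
        ∀ e ∉ F', d e = Function.update c a b e} with hUb
    -- injectivity of X ↦ X \ {a} on each side
    have hinj : ∀ b : Bool, Set.InjOn (fun X => X \ {a}) {X ∈ T | s X = b} := by
      intro b X hX X' hX' hEq
      have hEq' : X \ {a} = X' \ {a} := hEq
      simp only [Set.mem_setOf_eq, Set.mem_sep_iff] at hX hX'
      by_cases h1 : a ∈ X <;> by_cases h2 : a ∈ X'
      · have : insert a (X \ {a}) = insert a (X' \ {a}) := by rw [hEq']
        rwa [Set.insert_diff_singleton, Set.insert_diff_singleton,
          Set.insert_eq_self.2 h1, Set.insert_eq_self.2 h2] at this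
      · exfalso
        have hX'eq : X' = X \ {a} := by
          rw [hEq']; exact (Set.diff_singleton_eq_self h2).symm
        have hins : insert a X' = X := by
          rw [hX'eq, Set.insert_diff_singleton, Set.insert_eq_self.2 h1]
        have e1 : σ X a = b := (hsa X h1).symm.trans hX.2
        have e2 : (!(σ X a)) = b := by
          have h3 := hsn X' h2 (by rw [hins]; exact hX.1)
          rw [hins] at h3
          exact h3.symm.trans hX'.2
        rw [e1] at e2
        simp at e2
      · exfalso
        have hXeq : X = X' \ {a} := by
          rw [← hEq']; exact (Set.diff_singleton_eq_self h1).symm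
        have hins : insert a X = X' := by
          rw [hXeq, Set.insert_diff_singleton, Set.insert_eq_self.2 h2]
        have e1 : σ X' a = b := (hsa X' h2).symm.trans hX'.2
        have e2 : (!(σ X' a)) = b := by
          have h3 := hsn X h1 (by rw [hins]; exact hX'.1)
          rw [hins] at h3
          exact h3.symm.trans hX.2
        rw [e1] at e2
        simp at e2
      · rw [Set.diff_singleton_eq_self h1, Set.diff_singleton_eq_self h2] at hEq'
        exact hEq'
    -- partition of T
    have hpart : T.ncard = {X ∈ T | s X = false}.ncard + {X ∈ T | s X = true}.ncard := by
      rw [← Set.ncard_union_eq ?disj (Set.toFinite _) (Set.toFinite _)]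
      · congr 1
        ext X
        by_cases h : s X = true <;> simp [h]
      case disj =>
        rw [Set.disjoint_left]
        rintro X ⟨-, h1⟩ ⟨-, h2⟩
        rw [h1] at h2; exact Bool.false_ne_true h2
    -- hypothesis for ih
    have hTb' : ∀ b, ∀ Y ∈ Tb b, ∀ e ∈ Y, e ∈ F' := by
      rintro b Y ⟨X, hX, rfl⟩ e he
      rcases Finset.mem_insert.1 (hT X hX.1 e he.1) with h | h
      · exact absurd h he.2
      · exact h
    -- Ub b ⊆ U
    have hUbU : ∀ b, Ub b ⊆ U := by
      rintro b d ⟨⟨Y, ⟨X, hX, rfl⟩, hd0⟩, hout⟩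
      have hd : ∀ e ∈ X \ {a}, d e = σb b (X \ {a}) e := hd0
      have hXT : X ∈ T := hX.1
      have hsX : s X = b := hX.2
      have hda : d a = b := by
        have h0 := hout a ha
        rwa [Function.update_self] at h0
      constructor
      · refine ⟨X, hXT, ?_⟩
        by_cases h1 : a ∈ X
        · have hins : insert a (X \ {a}) = X := by
            rw [Set.insert_diff_singleton, Set.insert_eq_self.2 h1]
          have hσeq : σb b (X \ {a}) = σ X := by
            have h5 := hσb1 b (X \ {a}) (by rw [hins]; exact hXT)
              (by rw [hins, ← hsa X h1]; exact hsX)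
            rwa [hins] at h5
          intro e he
          by_cases hea : e = a
          · rw [hea, hda, ← hea]
            rw [hea, ← hsa X h1, hsX]
          · have heY : e ∈ X \ {a} := ⟨he, hea⟩
            rw [hd e heY, hσeq]
        · have hXd : X \ {a} = X := Set.diff_singleton_eq_self h1
          have hcond : ¬(insert a X ∈ T ∧ σ (insert a X) a = b) := by
            rintro ⟨hm, heq⟩
            have h3 := hsn X h1 hm
            rw [hsX, heq] at h3
            simp at h3
          have hσeq : σb b (X \ {a}) = σ X := by
            rw [hXd]; exact hσb2 b X hcond
          intro e he
          have heY : e ∈ X \ {a} := by rw [hXd]; exact he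
          rw [hd e heY, hσeq]
      · intro e he
        have he' : e ∉ F' := fun h => he (Finset.mem_insert_of_mem h)
        have hea : e ≠ a := fun h => he (h ▸ Finset.mem_insert_self a F')
        have h0 := hout e he'
        rwa [Function.update_of_ne hea] at h0
    -- Ub false and Ub true are disjoint
    have hdisj : Disjoint (Ub false) (Ub true) := by
      rw [Set.disjoint_left]
      rintro d ⟨-, h0⟩ ⟨-, h1⟩
      have e0 := h0 a ha
      have e1 := h1 a ha
      rw [Function.update_self] at e0 e1
      rw [e0] at e1
      exact Bool.false_ne_true e1
    -- combine
    have hcard : ∀ b, {X ∈ T | s X = b}.ncard ≤ (Ub b).ncard := by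
      intro b
      have h1 : {X ∈ T | s X = b}.ncard = (Tb b).ncard :=
        (Set.ncard_image_of_injOn (hinj b)).symm
      rw [h1]
      exact ih (Tb b) (σb b) (Function.update c a b) (hTb' b)
    calc T.ncard = {X ∈ T | s X = false}.ncard + {X ∈ T | s X = true}.ncard := hpart
      _ ≤ (Ub false).ncard + (Ub true).ncard :=
          Nat.add_le_add (hcard false) (hcard true)
      _ = (Ub false ∪ Ub true).ncard :=
          (Set.ncard_union_eq hdisj (Set.toFinite _) (Set.toFinite _)).symm
      _ ≤ U.ncard := Set.ncard_le_ncard (Set.union_subset (hUbU false) (hUbU true))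
            (Set.toFinite _)

/-- General inequality: if `P` is a monotone increasing digraph property
and `P'` is a property of edge subsets such that every `X` with `P' X` has an
orientation of its edges satisfying `P`, then the number of edge subsets satisfying `P'`
is at most the number of orientations of `G` satisfying `P`. -/
theorem general_inequality {V : Type*} [Fintype V] (G : SimpleGraph V)
    (ρ : Sym2 V → V × V) (hρ : ∀ e ∈ G.edgeSet, Sym2.mk (ρ e).1 (ρ e).2 = e)
    (P : (V → V → Prop) → Prop)
    (hmono : ∀ R R' : V → V → Prop, (∀ u v, R u v → R' u v) → P R → P R')
    (P' : Set G.edgeSet → Prop)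
    (hP' : ∀ X : Set G.edgeSet, P' X → ∃ d : G.edgeSet → Bool, P (arcsOn G ρ X d)) :
    {X : Set G.edgeSet | P' X}.ncard ≤
      {d : G.edgeSet → Bool | P (arcs G ρ d)}.ncard := by
  classical
  haveI : Finite ↥G.edgeSet := Set.toFinite G.edgeSet
  haveI : Fintype ↥G.edgeSet := Fintype.ofFinite _
  set σ : Set G.edgeSet → G.edgeSet → Bool := fun X =>
    if h : P' X then Classical.choose (hP' X h) else fun _ => false with hσ
  have key := cube_lemma (Finset.univ : Finset ↥G.edgeSet) {X | P' X} σ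
    (fun _ => false) (by intro X _ e _; exact Finset.mem_univ e)
  refine key.trans (Set.ncard_le_ncard ?_ (Set.toFinite _))
  rintro d ⟨⟨X, hX, hd⟩, -⟩
  have hX' : P' X := hX
  have hPX : P (arcsOn G ρ X (σ X)) := by
    simp only [hσ, dif_pos hX']
    exact Classical.choose_spec (hP' X hX')
  refine hmono _ _ ?_ hPX
  rintro u v ⟨e, heX, h⟩
  refine ⟨e, Set.mem_univ e, ?_⟩
  rcases h with ⟨h1, h2⟩ | ⟨h1, h2⟩
  · exact Or.inl ⟨by rw [hd e heX, h1], h2⟩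
  · exact Or.inr ⟨by rw [hd e heX, h1], h2⟩
end

section
/- Let G be a finite simple undirected graph with edge set E, let c : E → ℝ≥0 be a capacity function, let s, t be two vertices of G, and let w ∈ ℝ. Then the system 𝕊_w of all orientations d of G such that the digraph G⃗^d (with capacities c) admits an s-t flow of size at least w is shattering-extremal. -/
/-- The tail (source vertex) of the edge `e` oriented according to `d` (relative to the
reference orientation `ρ`). -/
def etail {V : Type*} {G : SimpleGraph V} (ρ : Sym2 V → V × V)
    (d : G.edgeSet → Bool) (e : G.edgeSet) : V :=
  if d e = false then (ρ e.val).1 else (ρ e.val).2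

/-- The head (target vertex) of the edge `e` oriented according to `d`. -/
def ehead {V : Type*} {G : SimpleGraph V} (ρ : Sym2 V → V × V)
    (d : G.edgeSet → Bool) (e : G.edgeSet) : V :=
  if d e = false then (ρ e.val).2 else (ρ e.val).1

open Classical in
/-- `φ` is an `s`-`t` flow of size `w` in the digraph obtained by orienting the edges of
`X ⊆ E(G)` according to `d`, with capacities `c`: it is supported on `X`, obeys the
capacity constraints, is conserved at every vertex other than `s` and `t`, and its net
outflow at `s` is `w`. -/
def IsFlowOn {V : Type*} (G : SimpleGraph V) [Fintype G.edgeSet]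
    (ρ : Sym2 V → V × V) (c : Sym2 V → NNReal) (s t : V)
    (X : Set G.edgeSet) (d : G.edgeSet → Bool) (φ : G.edgeSet → ℝ) (w : ℝ) : Prop :=
  (∀ e, e ∉ X → φ e = 0) ∧
  (∀ e, 0 ≤ φ e ∧ φ e ≤ (c e.val : ℝ)) ∧
  (∀ v : V, v ≠ s → v ≠ t →
    (∑ e : G.edgeSet, if e ∈ X ∧ ehead ρ d e = v then φ e else 0) =
      (∑ e : G.edgeSet, if e ∈ X ∧ etail ρ d e = v then φ e else 0)) ∧
  ((∑ e : G.edgeSet, if e ∈ X ∧ etail ρ d e = s then φ e else 0) -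
    (∑ e : G.edgeSet, if e ∈ X ∧ ehead ρ d e = s then φ e else 0) = w)

/-- The digraph obtained by orienting the edges of `X ⊆ E(G)` according to `d` admits an
`s`-`t` flow of size at least `w`. -/
def AdmitsFlow {V : Type*} (G : SimpleGraph V) [Fintype G.edgeSet]
    (ρ : Sym2 V → V × V) (c : Sym2 V → NNReal) (s t : V)
    (X : Set G.edgeSet) (d : G.edgeSet → Bool) (w : ℝ) : Prop :=
  ∃ (φ : G.edgeSet → ℝ) (w' : ℝ), w ≤ w' ∧ IsFlowOn G ρ c s t X d φ w'


section FlowSE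

open Classical Finset
set_option linter.unusedSectionVars false

variable {V : Type*} [Fintype V] {G : SimpleGraph V} [Fintype G.edgeSet]

/-- signed incidence weight of edge `e` at vertex `v` (w.r.t. reference orientation). -/
noncomputable def wt (ρ : Sym2 V → V × V) (e : G.edgeSet) (v : V) : ℝ :=
  (if (ρ e.val).1 = v then 1 else 0) - (if (ρ e.val).2 = v then 1 else 0)

/-- net outflow of the signed flow `x` at `v`. -/
noncomputable def dv (ρ : Sym2 V → V × V) (x : G.edgeSet → ℝ) (v : V) : ℝ :=
  ∑ e : G.edgeSet, x e * wt ρ e v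

lemma dv_single_add (ρ : Sym2 V → V × V) (x : G.edgeSet → ℝ) (e0 : G.edgeSet) (δ : ℝ) (v : V) :
    dv ρ (fun e => x e + if e = e0 then δ else 0) v = dv ρ x v + δ * wt ρ e0 v := by
  unfold dv
  simp only [add_mul, Finset.sum_add_distrib]
  congr 1
  have h1 : ∀ e ∈ Finset.univ, (if e = e0 then δ else 0) * wt ρ e v
      = if e = e0 then δ * wt ρ e0 v else 0 := by
    intro e _; by_cases h : e = e0 <;> simp [h]
  rw [Finset.sum_congr rfl h1]
  simp

lemma dv_zero (ρ : Sym2 V → V × V) (v : V) : dv ρ (fun _ : G.edgeSet => (0:ℝ)) v = 0 := by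
  simp [dv]

lemma sum_dv (ρ : Sym2 V → V × V) (x : G.edgeSet → ℝ) : ∑ v : V, dv ρ x v = 0 := by
  unfold dv wt
  rw [Finset.sum_comm]
  apply Finset.sum_eq_zero
  intro e _
  rw [← Finset.mul_sum]
  simp [Finset.sum_sub_distrib]

/-- the bridge between `(d, φ)`-style flows and signed flows. -/
lemma bridge (ρ : Sym2 V → V × V) (d : G.edgeSet → Bool) (φ x : G.edgeSet → ℝ)
    (h : ∀ e, (d e = false ∧ x e = φ e) ∨ (d e = true ∧ x e = -φ e)) (v : V) :
    (∑ e : G.edgeSet, if etail ρ d e = v then φ e else 0) -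
      (∑ e : G.edgeSet, if ehead ρ d e = v then φ e else 0) = dv ρ x v := by
  unfold dv
  rw [← Finset.sum_sub_distrib]
  apply Finset.sum_congr rfl
  intro e _
  rcases h e with ⟨hd, hx⟩ | ⟨hd, hx⟩ <;>
    simp only [etail, ehead, hd, if_pos rfl, wt, hx] <;>
  · split_ifs <;> ring_nf <;> simp_all

lemma cut_sum (ρ : Sym2 V → V × V) (x : G.edgeSet → ℝ) (A : Set V) :
    (∑ v : V, if v ∈ A then dv ρ x v else 0)
      = ∑ e : G.edgeSet, x e * ((if (ρ e.val).1 ∈ A then (1:ℝ) else 0)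
          - (if (ρ e.val).2 ∈ A then 1 else 0)) := by
  unfold dv wt
  have h1 : ∀ v ∈ Finset.univ, (if v ∈ A then ∑ e : G.edgeSet,
        x e * ((if (ρ e.val).1 = v then (1:ℝ) else 0) - (if (ρ e.val).2 = v then 1 else 0)) else 0)
      = ∑ e : G.edgeSet, (if v ∈ A then
          x e * ((if (ρ e.val).1 = v then (1:ℝ) else 0) - (if (ρ e.val).2 = v then 1 else 0)) else 0) := by
    intro v _; split_ifs with h <;> simp
  rw [Finset.sum_congr rfl h1, Finset.sum_comm]
  apply Finset.sum_congr rfl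
  intro e _
  have h2 : ∀ v ∈ Finset.univ, (if v ∈ A then
        x e * ((if (ρ e.val).1 = v then (1:ℝ) else 0) - (if (ρ e.val).2 = v then 1 else 0)) else 0)
      = x e * (if (ρ e.val).1 = v then (if v ∈ A then (1:ℝ) else 0) else 0)
        - x e * (if (ρ e.val).2 = v then (if v ∈ A then (1:ℝ) else 0) else 0) := by
    intro v _; split_ifs <;> ring
  rw [Finset.sum_congr rfl h2, Finset.sum_sub_distrib, ← Finset.mul_sum, ← Finset.mul_sum,
    Finset.sum_ite_eq, Finset.sum_ite_eq]
  simp only [Finset.mem_univ, if_true]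
  ring

lemma dv_source (ρ : Sym2 V → V × V) (x : G.edgeSet → ℝ) (s t : V)
    (hcons : ∀ v, v ≠ s → v ≠ t → dv ρ x v = 0)
    (A : Set V) (hs : s ∈ A) (ht : t ∉ A) :
    dv ρ x s = ∑ e : G.edgeSet, x e * ((if (ρ e.val).1 ∈ A then (1:ℝ) else 0)
        - (if (ρ e.val).2 ∈ A then 1 else 0)) := by
  rw [← cut_sum, Finset.sum_eq_single s]
  · rw [if_pos hs]
  · intro b _ hb
    by_cases hbA : b ∈ A
    · rw [if_pos hbA, hcons b hb (fun h => ht (h ▸ hbA))]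
    · rw [if_neg hbA]
  · intro h; exact absurd (Finset.mem_univ s) h

lemma dv_source_self (ρ : Sym2 V → V × V) (x : G.edgeSet → ℝ) (s : V)
    (hcons : ∀ v, v ≠ s → dv ρ x v = 0) : dv ρ x s = 0 := by
  have h := sum_dv ρ x
  rwa [Finset.sum_eq_single s (fun b _ hb => hcons b hb)
    (fun h => absurd (Finset.mem_univ s) h)] at h

lemma ends_ne {ρ : Sym2 V → V × V} (hρ : ∀ e ∈ G.edgeSet, Function.uncurry Sym2.mk (ρ e) = e) (e : G.edgeSet) :
    (ρ e.val).1 ≠ (ρ e.val).2 := by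
  intro h
  exact (SimpleGraph.not_isDiag_of_mem_edgeSet G e.prop)
    (by rw [← hρ e.val e.prop]; exact Sym2.mk_isDiag_iff.mpr h)

/-- capacity of the cut `A` not counting edges in `Y`. -/
noncomputable def cutcap (ρ : Sym2 V → V × V) (c : Sym2 V → NNReal) (Y : Set G.edgeSet)
    (A : Set V) : ℝ :=
  ∑ e : G.edgeSet, if e ∉ Y ∧ ¬((ρ e.val).1 ∈ A ↔ (ρ e.val).2 ∈ A) then (c e.val : ℝ) else 0

lemma flow_to_signed (ρ : Sym2 V → V × V) (c : Sym2 V → NNReal) (s t : V)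
    (d : G.edgeSet → Bool) (φ : G.edgeSet → ℝ) (w' : ℝ)
    (hf : IsFlowOn G ρ c s t Set.univ d φ w') :
    ∃ x : G.edgeSet → ℝ,
      (∀ e, (d e = false ∧ x e = φ e) ∨ (d e = true ∧ x e = -φ e)) ∧
      (∀ e, |x e| ≤ (c e.val : ℝ)) ∧
      (∀ v, v ≠ s → v ≠ t → dv ρ x v = 0) ∧ dv ρ x s = w' := by
  obtain ⟨-, hcap, hcons, hval⟩ := hf
  simp only [Set.mem_univ, true_and] at hcons hval
  refine ⟨fun e => if d e = false then φ e else -φ e, ?_, ?_, ?_, ?_⟩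
  · intro e
    by_cases hde : d e = false
    · exact Or.inl ⟨hde, by simp [hde]⟩
    · exact Or.inr ⟨Bool.not_eq_false (d e) ▸ (by simpa using hde), by simp [hde]⟩
  case refine_2 =>
    intro e
    have h := hcap e
    show |if d e = false then φ e else -φ e| ≤ (c e.val : ℝ)
    split_ifs
    · rw [abs_of_nonneg h.1]; exact h.2
    · rw [abs_neg, abs_of_nonneg h.1]; exact h.2
  case refine_3 =>
    intro v hv1 hv2
    rw [← bridge ρ d φ _ ?_ v, hcons v hv1 hv2, sub_self]
    intro e
    by_cases hde : d e = false
    · exact Or.inl ⟨hde, by simp [hde]⟩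
    · exact Or.inr ⟨by simpa using hde, by simp [hde]⟩
  case refine_4 =>
    rw [← bridge ρ d φ _ ?_ s]
    · exact hval
    intro e
    by_cases hde : d e = false
    · exact Or.inl ⟨hde, by simp [hde]⟩
    · exact Or.inr ⟨by simpa using hde, by simp [hde]⟩

lemma cut_ge_of_flow (ρ : Sym2 V → V × V) (c : Sym2 V → NNReal) (s t : V) (w : ℝ)
    (Y : Set G.edgeSet) (A : Set V) (hs : s ∈ A) (ht : t ∉ A) (d : G.edgeSet → Bool)
    (hd : ∀ e ∈ Y, d e = decide ((ρ e.val).1 ∈ A))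
    (hadm : AdmitsFlow G ρ c s t Set.univ d w) : w ≤ cutcap ρ c Y A := by
  obtain ⟨φ, w', hww', hf⟩ := hadm
  have hφ := hf.2.1
  obtain ⟨x, hsign, hcap, hcons, hval⟩ := flow_to_signed ρ c s t d φ w' hf
  have h1 := dv_source ρ x s t hcons A hs ht
  have h2 : ∀ e ∈ Finset.univ,
      x e * ((if (ρ e.val).1 ∈ A then (1:ℝ) else 0) - (if (ρ e.val).2 ∈ A then 1 else 0))
      ≤ (if e ∉ Y ∧ ¬((ρ e.val).1 ∈ A ↔ (ρ e.val).2 ∈ A) then (c e.val:ℝ) else 0) := by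
    intro e _
    have habs := abs_le.mp (hcap e)
    have hφe := hφ e
    by_cases h1A : (ρ e.val).1 ∈ A <;> by_cases h2A : (ρ e.val).2 ∈ A
    · rw [if_pos h1A, if_pos h2A,
        if_neg (show ¬(e ∉ Y ∧ ¬((ρ e.val).1 ∈ A ↔ (ρ e.val).2 ∈ A)) by tauto)]
      norm_num
    · rw [if_pos h1A, if_neg h2A]
      by_cases hY : e ∈ Y
      · rw [if_neg (show ¬(e ∉ Y ∧ ¬((ρ e.val).1 ∈ A ↔ (ρ e.val).2 ∈ A)) by tauto)]
        have hde : d e = true := by rw [hd e hY]; simp [h1A]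
        have hx : x e = -φ e := by
          rcases hsign e with ⟨h, _⟩ | ⟨_, h⟩
          · simp [hde] at h
          · exact h
        rw [hx]; nlinarith [hφe.1]
      · rw [if_pos (show e ∉ Y ∧ ¬((ρ e.val).1 ∈ A ↔ (ρ e.val).2 ∈ A) from ⟨hY, by tauto⟩)]
        nlinarith [habs.2]
    · rw [if_neg h1A, if_pos h2A]
      by_cases hY : e ∈ Y
      · rw [if_neg (show ¬(e ∉ Y ∧ ¬((ρ e.val).1 ∈ A ↔ (ρ e.val).2 ∈ A)) by tauto)]
        have hde : d e = false := by rw [hd e hY]; simp [h1A]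
        have hx : x e = φ e := by
          rcases hsign e with ⟨_, h⟩ | ⟨h, _⟩
          · exact h
          · simp [hde] at h
        rw [hx]; nlinarith [hφe.1]
      · rw [if_pos (show e ∉ Y ∧ ¬((ρ e.val).1 ∈ A ↔ (ρ e.val).2 ∈ A) from ⟨hY, by tauto⟩)]
        nlinarith [habs.1]
    · rw [if_neg h1A, if_neg h2A,
        if_neg (show ¬(e ∉ Y ∧ ¬((ρ e.val).1 ∈ A ↔ (ρ e.val).2 ∈ A)) by tauto)]
      norm_num
  have hsum := Finset.sum_le_sum h2
  rw [← h1] at hsum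
  calc w ≤ w' := hww'
    _ = dv ρ x s := hval.symm
    _ ≤ _ := hsum

/-- residual arc relation for the signed flow `x` (avoiding leaving `t`). -/
def Rres (ρ : Sym2 V → V × V) (c : Sym2 V → NNReal) (Y : Set G.edgeSet) (t : V)
    (x : G.edgeSet → ℝ) (u v : V) : Prop :=
  u ≠ t ∧ ∃ e : G.edgeSet, e ∉ Y ∧
    ((ρ e.val = (u, v) ∧ x e < (c e.val : ℝ)) ∨ (ρ e.val = (v, u) ∧ -(c e.val : ℝ) < x e))

lemma ite_eq_swap (p q : V) : (if p = q then (1:ℝ) else 0) = (if q = p then 1 else 0) := by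
  by_cases h : p = q
  · rw [if_pos h, if_pos h.symm]
  · rw [if_neg h, if_neg (fun hh => h hh.symm)]

lemma reach_aug (ρ : Sym2 V → V × V) (hρ : ∀ e ∈ G.edgeSet, Function.uncurry Sym2.mk (ρ e) = e)
    (c : Sym2 V → NNReal) (Y : Set G.edgeSet) (s t : V) (x : G.edgeSet → ℝ)
    (hcap : ∀ e, |x e| ≤ (c e.val : ℝ)) {v : V}
    (hv : Relation.ReflTransGen (Rres ρ c Y t x) s v) :
    ∀ ε0 : ℝ, 0 < ε0 → ∃ (x' : G.edgeSet → ℝ) (ε : ℝ), 0 < ε ∧ ε ≤ ε0 ∧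
      (∀ e, |x' e| ≤ (c e.val : ℝ)) ∧ (∀ e ∈ Y, x' e = x e) ∧
      (∀ e, |x' e - x e| ≤ ε0) ∧
      (∀ u, dv ρ x' u = dv ρ x u
        + ε * ((if u = s then (1:ℝ) else 0) - (if u = v then 1 else 0))) := by
  induction hv with
  | refl =>
    intro ε0 hε0
    exact ⟨x, ε0, hε0, le_refl _, hcap, fun e _ => rfl, fun e => by simp [le_of_lt hε0],
      fun u => by simp⟩
  | @tail a b hra hrab ih =>
    intro ε0 hε0
    obtain ⟨hat, e, heY, harc⟩ := hrab
    rcases harc with ⟨hor, hlt⟩ | ⟨hor, hlt⟩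
    · -- forward residual arc a → b along e, ρ e = (a, b)
      set sl : ℝ := (c e.val : ℝ) - x e with hsl
      have hslpos : 0 < sl := by simp only [hsl]; linarith
      obtain ⟨x1, ε, hε, hεle, hcap1, hY1, hclose1, hdv1⟩ :=
        ih (min (ε0/2) (sl/2)) (by positivity)
      have hεsl : ε ≤ sl/2 := le_trans hεle (min_le_right _ _)
      have hεε0 : ε ≤ ε0/2 := le_trans hεle (min_le_left _ _)
      have hcle : |x1 e - x e| ≤ sl/2 := le_trans (hclose1 e) (min_le_right _ _)
      refine ⟨fun e' => x1 e' + if e' = e then ε else 0, ε, hε, by linarith, ?_, ?_, ?_, ?_⟩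
      · intro e'
        beta_reduce
        by_cases he' : e' = e
        · subst he'
          have h1 := abs_le.mp (hcap1 e')
          have h2 := abs_le.mp hcle
          rw [if_pos rfl]
          exact abs_le.mpr ⟨by linarith, by linarith⟩
        · rw [if_neg he', add_zero]; exact hcap1 e'
      · intro e' he'
        beta_reduce
        rw [if_neg (show ¬(e' = e) from fun h => heY (h ▸ he')), add_zero]
        exact hY1 e' he'
      · intro e'
        beta_reduce
        by_cases he' : e' = e
        · subst he'
          have h2 := abs_le.mp (le_trans (hclose1 e') (min_le_left _ _))
          rw [if_pos rfl]
          exact abs_le.mpr ⟨by linarith, by linarith⟩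
        · rw [if_neg he', add_zero]
          exact le_trans (hclose1 e') (min_le_left _ _) |>.trans (by linarith)
      · intro u
        rw [dv_single_add ρ x1 e ε u, hdv1 u]
        have h1 : (ρ e.val).1 = a := by rw [hor]
        have h2 : (ρ e.val).2 = b := by rw [hor]
        unfold wt
        rw [h1, h2, ite_eq_swap a u, ite_eq_swap b u]
        split_ifs <;> ring
    · -- backward residual arc a → b along e, ρ e = (b, a)
      set sl : ℝ := x e + (c e.val : ℝ) with hsl
      have hslpos : 0 < sl := by simp only [hsl]; linarith
      obtain ⟨x1, ε, hε, hεle, hcap1, hY1, hclose1, hdv1⟩ :=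
        ih (min (ε0/2) (sl/2)) (by positivity)
      have hεsl : ε ≤ sl/2 := le_trans hεle (min_le_right _ _)
      have hεε0 : ε ≤ ε0/2 := le_trans hεle (min_le_left _ _)
      have hcle : |x1 e - x e| ≤ sl/2 := le_trans (hclose1 e) (min_le_right _ _)
      refine ⟨fun e' => x1 e' + if e' = e then -ε else 0, ε, hε, by linarith, ?_, ?_, ?_, ?_⟩
      · intro e'
        beta_reduce
        by_cases he' : e' = e
        · subst he'
          have h1 := abs_le.mp (hcap1 e')
          have h2 := abs_le.mp hcle
          rw [if_pos rfl]
          exact abs_le.mpr ⟨by linarith, by linarith⟩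
        · rw [if_neg he', add_zero]; exact hcap1 e'
      · intro e' he'
        beta_reduce
        rw [if_neg (show ¬(e' = e) from fun h => heY (h ▸ he')), add_zero]
        exact hY1 e' he'
      · intro e'
        beta_reduce
        by_cases he' : e' = e
        · subst he'
          have h2 := abs_le.mp (le_trans (hclose1 e') (min_le_left _ _))
          rw [if_pos rfl]
          exact abs_le.mpr ⟨by linarith, by linarith⟩
        · rw [if_neg he', add_zero]
          exact le_trans (hclose1 e') (min_le_left _ _) |>.trans (by linarith)
      · intro u
        rw [dv_single_add ρ x1 e (-ε) u, hdv1 u]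
        have h1 : (ρ e.val).1 = b := by rw [hor]
        have h2 : (ρ e.val).2 = a := by rw [hor]
        unfold wt
        rw [h1, h2, ite_eq_swap b u, ite_eq_swap a u]
        split_ifs <;> ring

lemma exists_signed_flow (ρ : Sym2 V → V × V) (hρ : ∀ e ∈ G.edgeSet, Function.uncurry Sym2.mk (ρ e) = e)
    (c : Sym2 V → NNReal) (Y : Set G.edgeSet) (s t : V) (w : ℝ) (hst : s ≠ t)
    (hcut : ∀ A : Set V, s ∈ A → t ∉ A → w ≤ cutcap ρ c Y A) :
    ∃ x : G.edgeSet → ℝ, (∀ e, |x e| ≤ (c e.val : ℝ)) ∧ (∀ e ∈ Y, x e = 0) ∧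
      (∀ v, v ≠ s → v ≠ t → dv ρ x v = 0) ∧ w ≤ dv ρ x s := by
  set K : Set (G.edgeSet → ℝ) := {x | (∀ e, |x e| ≤ (c e.val : ℝ)) ∧ (∀ e ∈ Y, x e = 0) ∧
      (∀ v, v ≠ s → v ≠ t → dv ρ x v = 0)} with hK
  have hK0 : (fun _ => (0:ℝ)) ∈ K :=
    ⟨fun e => by simp, fun e _ => rfl, fun v _ _ => dv_zero ρ v⟩
  have hdvcont : ∀ v, Continuous fun x : G.edgeSet → ℝ => dv ρ x v := by
    intro v; unfold dv
    exact continuous_finset_sum _ fun e _ => (continuous_apply e).mul continuous_const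
  have hKclosed : IsClosed K := by
    have h1 : IsClosed {x : G.edgeSet → ℝ | ∀ e, |x e| ≤ (c e.val : ℝ)} := by
      rw [Set.setOf_forall]
      exact isClosed_iInter fun e => isClosed_le ((continuous_apply e).abs) continuous_const
    have h2 : IsClosed {x : G.edgeSet → ℝ | ∀ e ∈ Y, x e = 0} := by
      rw [Set.setOf_forall]
      refine isClosed_iInter fun e => ?_
      by_cases hY : e ∈ Y
      · simpa [hY] using isClosed_eq (continuous_apply e) continuous_const
      · simp [hY]
    have h3 : IsClosed {x : G.edgeSet → ℝ | ∀ v, v ≠ s → v ≠ t → dv ρ x v = 0} := by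
      rw [Set.setOf_forall]
      refine isClosed_iInter fun v => ?_
      by_cases hv1 : v = s
      · simp [hv1]
      · by_cases hv2 : v = t
        · simp [hv2]
        · simpa [hv1, hv2] using isClosed_eq (hdvcont v) continuous_const
    rw [hK, Set.setOf_and, Set.setOf_and]
    exact h1.inter (h2.inter h3)
  have hKcomp : IsCompact K := by
    refine IsCompact.of_isClosed_subset
      (isCompact_univ_pi fun e => isCompact_Icc (a := -(c e.val : ℝ)) (b := (c e.val : ℝ)))
      hKclosed ?_
    intro x hx e _
    exact abs_le.mp (hx.1 e)
  obtain ⟨x, hxK, hmax⟩ := hKcomp.exists_isMaxOn ⟨_, hK0⟩ ((hdvcont s).continuousOn)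
  rw [isMaxOn_iff] at hmax
  by_cases hT : Relation.ReflTransGen (Rres ρ c Y t x) s t
  · exfalso
    obtain ⟨x', ε, hε, hεle, hcap', hY', hclose', hdv'⟩ :=
      reach_aug ρ hρ c Y s t x hxK.1 hT 1 one_pos
    have hx'K : x' ∈ K := by
      refine ⟨hcap', fun e he => by rw [hY' e he]; exact hxK.2.1 e he, fun v hv1 hv2 => ?_⟩
      rw [hdv' v, if_neg hv1, if_neg hv2, hxK.2.2 v hv1 hv2]; ring
    have hval' : dv ρ x' s = dv ρ x s + ε := by
      rw [hdv' s, if_pos rfl, if_neg hst]; ring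
    have := hmax x' hx'K
    simp only [hval'] at this
    linarith
  · refine ⟨x, hxK.1, hxK.2.1, hxK.2.2, ?_⟩
    set A : Set V := {v | Relation.ReflTransGen (Rres ρ c Y t x) s v} with hA
    have hsA : s ∈ A := Relation.ReflTransGen.refl
    have htA : t ∉ A := hT
    have hle := hcut A hsA htA
    have heq : dv ρ x s = cutcap ρ c Y A := by
      rw [dv_source ρ x s t hxK.2.2 A hsA htA, cutcap]
      apply Finset.sum_congr rfl
      intro e _
      by_cases hY : e ∈ Y
      · rw [hxK.2.1 e hY, zero_mul,
          if_neg (show ¬(e ∉ Y ∧ ¬((ρ e.val).1 ∈ A ↔ (ρ e.val).2 ∈ A)) by tauto)]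
      · by_cases h1A : (ρ e.val).1 ∈ A <;> by_cases h2A : (ρ e.val).2 ∈ A
        · rw [if_pos h1A, if_pos h2A,
            if_neg (show ¬(e ∉ Y ∧ ¬((ρ e.val).1 ∈ A ↔ (ρ e.val).2 ∈ A)) by tauto)]
          ring
        · have hxe : x e = (c e.val : ℝ) := by
            by_contra hne
            have hlt : x e < (c e.val : ℝ) := lt_of_le_of_ne (abs_le.mp (hxK.1 e)).2 hne
            exact h2A (Relation.ReflTransGen.tail h1A
              ⟨fun h => htA (h ▸ h1A), e, hY, Or.inl ⟨(Prod.mk.eta).symm, hlt⟩⟩)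
          rw [if_pos h1A, if_neg h2A,
            if_pos (show e ∉ Y ∧ ¬((ρ e.val).1 ∈ A ↔ (ρ e.val).2 ∈ A) from ⟨hY, by tauto⟩), hxe]
          ring
        · have hxe : x e = -(c e.val : ℝ) := by
            by_contra hne
            have hlt : -(c e.val : ℝ) < x e :=
              lt_of_le_of_ne (abs_le.mp (hxK.1 e)).1 (fun h => hne h.symm)
            exact h1A (Relation.ReflTransGen.tail h2A
              ⟨fun h => htA (h ▸ h2A), e, hY, Or.inr ⟨(Prod.mk.eta).symm, hlt⟩⟩)
          rw [if_neg h1A, if_pos h2A,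
            if_pos (show e ∉ Y ∧ ¬((ρ e.val).1 ∈ A ↔ (ρ e.val).2 ∈ A) from ⟨hY, by tauto⟩), hxe]
          ring
        · rw [if_neg h1A, if_neg h2A,
            if_neg (show ¬(e ∉ Y ∧ ¬((ρ e.val).1 ∈ A ↔ (ρ e.val).2 ∈ A)) by tauto)]
          ring
    linarith

end FlowSE

/-- the system `𝕊_w` of orientations of `G` admitting an `s`-`t` flow of
size at least `w` is shattering-extremal. -/
theorem flow_system_SE {V : Type*} [Fintype V] (G : SimpleGraph V) [Fintype G.edgeSet]
    (ρ : Sym2 V → V × V) (hρ : ∀ e ∈ G.edgeSet, Function.uncurry Sym2.mk (ρ e) = e)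
    (c : Sym2 V → NNReal) (s t : V) (w : ℝ) :
    str {d : G.edgeSet → Bool | AdmitsFlow G ρ c s t Set.univ d w} =
      sstr {d : G.edgeSet → Bool | AdmitsFlow G ρ c s t Set.univ d w} := by
  classical
  ext Y
  simp only [str, sstr, Set.mem_setOf_eq]
  constructor
  · intro hsh
    by_cases hw : w ≤ 0
    · refine ⟨fun _ => false, fun f => ⟨fun e => if e ∈ Y then f e else false, ?_, ?_, ?_⟩⟩
      · exact ⟨fun _ => 0, 0, hw, fun e _ => rfl, fun e => ⟨le_refl 0, NNReal.coe_nonneg _⟩,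
          fun v _ _ => by simp, by simp⟩
      · intro e he; simp [he]
      · intro e he; rw [Set.mem_compl_iff] at he; simp [he]
    · push_neg at hw
      by_cases hst : s = t
      · exfalso
        obtain ⟨d, hdS, -⟩ := hsh (fun _ => false)
        obtain ⟨φ, w', hww', hf⟩ := hdS
        obtain ⟨x, -, -, hcons, hval⟩ := flow_to_signed ρ c s t d φ w' hf
        have h0 : dv ρ x s = 0 := dv_source_self ρ x s (fun v hv => hcons v hv (hst ▸ hv))
        linarith
      · have hcut : ∀ A : Set V, s ∈ A → t ∉ A → w ≤ cutcap ρ c Y A := by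
          intro A hs ht
          obtain ⟨d, hdS, hEq⟩ := hsh (fun e => decide ((ρ e.val).1 ∈ A))
          exact cut_ge_of_flow ρ c s t w Y A hs ht d (fun e he => hEq he) hdS
        obtain ⟨x, hcap, hY0, hcons, hval⟩ := exists_signed_flow ρ hρ c Y s t w hst hcut
        refine ⟨fun e => decide (x e < 0),
          fun f => ⟨fun e => if e ∈ Y then f e else decide (x e < 0), ?_, ?_, ?_⟩⟩
        · set d : G.edgeSet → Bool := fun e => if e ∈ Y then f e else decide (x e < 0) with hd
          have hsign : ∀ e, (d e = false ∧ x e = |x e|) ∨ (d e = true ∧ x e = -|x e|) := by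
            intro e
            by_cases he : e ∈ Y
            · have hx0 : x e = 0 := hY0 e he
              cases hfe : f e
              · exact Or.inl ⟨by simp [hd, he, hfe], by simp [hx0]⟩
              · exact Or.inr ⟨by simp [hd, he, hfe], by simp [hx0]⟩
            · by_cases hneg : x e < 0
              · exact Or.inr ⟨by simp [hd, he, hneg], by rw [abs_of_neg hneg]; ring⟩
              · exact Or.inl ⟨by simp [hd, he, hneg], (abs_of_nonneg (not_lt.mp hneg)).symm⟩
          refine ⟨fun e => |x e|, dv ρ x s, hval, fun e he => absurd (Set.mem_univ e) he,
            fun e => ⟨abs_nonneg _, hcap e⟩, ?_, ?_⟩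
          · intro v hv1 hv2
            simp only [Set.mem_univ, true_and]
            have hb := bridge ρ d (fun e => |x e|) x hsign v
            rw [hcons v hv1 hv2] at hb
            linarith
          · simp only [Set.mem_univ, true_and]
            exact bridge ρ d (fun e => |x e|) x hsign s
        · intro e he; simp [he]
        · intro e he; rw [Set.mem_compl_iff] at he; simp [he]
  · rintro ⟨g, hg⟩ f
    obtain ⟨h, hS, hf, -⟩ := hg f
    exact ⟨h, hS, hf⟩
end

section
/- Let G be a finite simple undirected graph with m edges, let c : E → ℝ≥0 be a capacity function, let s, t be two vertices, let w ∈ ℝ, and suppose G itself admits an s-t flow of size at least w. Let 𝕊_w be the system of all orientations d of G such that G⃗^d admits an s-t flow of size at least w, and let e_w be the minimum number of edges of a subgraph G_X that admits an s-t flow of size at least w. Then dvc(𝕊_w) = vc(𝕊_w) = m − e_w. -/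
/-- The VC-dimension of a system: the maximum cardinality of a shattered set. -/
noncomputable def vcNat {α : Type*} (S : Set (α → Bool)) : ℕ :=
  sSup {n | ∃ Y : Set α, Shatters S Y ∧ Y.ncard = n}

/-- The dual VC-dimension of a system: the maximum cardinality of a strongly
shattered set. -/
noncomputable def dvcNat {α : Type*} (S : Set (α → Bool)) : ℕ :=
  sSup {n | ∃ Y : Set α, StronglyShatters S Y ∧ Y.ncard = n}


section Aux

open Classical

/-- Net outflow of a signed edge function at a vertex, relative to reference
orientation `ρ`. -/
noncomputable def netOut {V : Type*} (G : SimpleGraph V) [Fintype G.edgeSet]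
    (ρ : Sym2 V → V × V) (ψ : G.edgeSet → ℝ) (v : V) : ℝ :=
  ∑ e : G.edgeSet,
    ((if (ρ e.val).1 = v then (1 : ℝ) else 0) - (if (ρ e.val).2 = v then (1 : ℝ) else 0)) * ψ e

/-- A signed `s`-`t` flow of value `w'`. -/
def SFlow {V : Type*} (G : SimpleGraph V) [Fintype G.edgeSet]
    (ρ : Sym2 V → V × V) (c : Sym2 V → NNReal) (s t : V)
    (ψ : G.edgeSet → ℝ) (w' : ℝ) : Prop :=
  (∀ e, |ψ e| ≤ (c e.val : ℝ)) ∧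
  (∀ v : V, v ≠ s → v ≠ t → netOut G ρ ψ v = 0) ∧
  netOut G ρ ψ s = w'

lemma netOut_eq {V : Type*} (G : SimpleGraph V) [Fintype G.edgeSet] (ρ : Sym2 V → V × V)
    (X : Set G.edgeSet) (d : G.edgeSet → Bool) (φ ψ : G.edgeSet → ℝ)
    (hψ : ∀ e, ψ e = if d e = false then φ e else -φ e)
    (h0 : ∀ e, e ∉ X → φ e = 0) (v : V) :
    netOut G ρ ψ v =
      (∑ e : G.edgeSet, if e ∈ X ∧ etail ρ d e = v then φ e else 0) -
      (∑ e : G.edgeSet, if e ∈ X ∧ ehead ρ d e = v then φ e else 0) := by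
  rw [netOut, ← Finset.sum_sub_distrib]
  refine Finset.sum_congr rfl fun e _ => ?_
  rw [hψ e]
  by_cases hX : e ∈ X
  · cases hd : d e <;> simp only [etail, ehead, hd, hX, true_and, if_true, if_false,
      Bool.false_eq_true, reduceIte] <;> split_ifs <;> ring
  · rw [h0 e hX]
    simp [hX]

lemma netOut_combo {V : Type*} (G : SimpleGraph V) [Fintype G.edgeSet] (ρ : Sym2 V → V × V)
    (ψ1 ψ2 : G.edgeSet → ℝ) (a b : ℝ) (v : V) :
    netOut G ρ (fun e => a * ψ1 e + b * ψ2 e) v =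
      a * netOut G ρ ψ1 v + b * netOut G ρ ψ2 v := by
  unfold netOut
  rw [Finset.mul_sum, Finset.mul_sum, ← Finset.sum_add_distrib]
  exact Finset.sum_congr rfl fun e _ => by ring

lemma sflow_convex {V : Type*} (G : SimpleGraph V) [Fintype G.edgeSet] (ρ : Sym2 V → V × V)
    (c : Sym2 V → NNReal) (s t : V) (ψ1 ψ2 : G.edgeSet → ℝ) (w1 w2 a b : ℝ)
    (ha : 0 ≤ a) (hb : 0 ≤ b) (hab : a + b = 1)
    (h1 : SFlow G ρ c s t ψ1 w1) (h2 : SFlow G ρ c s t ψ2 w2) :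
    SFlow G ρ c s t (fun e => a * ψ1 e + b * ψ2 e) (a * w1 + b * w2) := by
  obtain ⟨hc1, hv1, hs1⟩ := h1
  obtain ⟨hc2, hv2, hs2⟩ := h2
  refine ⟨fun e => ?_, fun v hvs hvt => ?_, ?_⟩
  · calc |a * ψ1 e + b * ψ2 e| ≤ |a * ψ1 e| + |b * ψ2 e| := abs_add_le _ _
      _ = a * |ψ1 e| + b * |ψ2 e| := by
          rw [abs_mul, abs_mul, abs_of_nonneg ha, abs_of_nonneg hb]
      _ ≤ a * (c e.val : ℝ) + b * (c e.val : ℝ) := by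
          gcongr
          exacts [hc1 e, hc2 e]
      _ = (c e.val : ℝ) := by rw [← add_mul, hab, one_mul]
  · rw [netOut_combo, hv1 v hvs hvt, hv2 v hvs hvt]; ring
  · rw [netOut_combo, hs1, hs2]

lemma zeroing {E : Type*} [DecidableEq E] (w : ℝ) (Y : Finset E) :
    ∀ P : (E → ℝ) → ℝ → Prop,
      (∀ ψ1 w1 ψ2 w2 a b, 0 ≤ a → 0 ≤ b → a + b = 1 → P ψ1 w1 → P ψ2 w2 →
        P (fun e => a * ψ1 e + b * ψ2 e) (a * w1 + b * w2)) →
      (∀ σ : E → Bool, ∃ ψ w', w ≤ w' ∧ P ψ w' ∧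
        ∀ e ∈ Y, if σ e then ψ e ≤ 0 else 0 ≤ ψ e) →
      ∃ ψ w', w ≤ w' ∧ P ψ w' ∧ ∀ e ∈ Y, ψ e = 0 := by
  induction Y using Finset.induction_on with
  | empty =>
    intro P _ hyp
    obtain ⟨ψ, w', h1, h2, _⟩ := hyp (fun _ => false)
    exact ⟨ψ, w', h1, h2, by simp⟩
  | insert _ _ ha IH =>
    rename_i a Y'
    intro P hconv hyp
    obtain ⟨ψp, wp, hwp, ⟨hPp, hap⟩, hzp⟩ := IH (fun ψ w' => P ψ w' ∧ 0 ≤ ψ a)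
      (fun ψ1 w1 ψ2 w2 α β hα hβ hαβ h1 h2 =>
        ⟨hconv _ _ _ _ _ _ hα hβ hαβ h1.1 h2.1,
         add_nonneg (mul_nonneg hα h1.2) (mul_nonneg hβ h2.2)⟩)
      (fun σ => by
        obtain ⟨ψ, w', h1, h2, h3⟩ := hyp (Function.update σ a false)
        refine ⟨ψ, w', h1, ⟨h2, ?_⟩, fun e he => ?_⟩
        · have h4 := h3 a (Finset.mem_insert_self a Y')
          simpa using h4
        · have h4 := h3 e (Finset.mem_insert_of_mem he)
          rwa [Function.update_of_ne (by rintro rfl; exact ha he)] at h4)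
    obtain ⟨ψm, wm, hwm, ⟨hPm, ham⟩, hzm⟩ := IH (fun ψ w' => P ψ w' ∧ ψ a ≤ 0)
      (fun ψ1 w1 ψ2 w2 α β hα hβ hαβ h1 h2 =>
        ⟨hconv _ _ _ _ _ _ hα hβ hαβ h1.1 h2.1, by
          show α * ψ1 a + β * ψ2 a ≤ 0
          linarith [mul_nonneg hα (neg_nonneg.mpr h1.2),
            mul_nonneg hβ (neg_nonneg.mpr h2.2)]⟩)
      (fun σ => by
        obtain ⟨ψ, w', h1, h2, h3⟩ := hyp (Function.update σ a true)
        refine ⟨ψ, w', h1, ⟨h2, ?_⟩, fun e he => ?_⟩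
        · have h4 := h3 a (Finset.mem_insert_self a Y')
          simpa using h4
        · have h4 := h3 e (Finset.mem_insert_of_mem he)
          rwa [Function.update_of_ne (by rintro rfl; exact ha he)] at h4)
    rcases eq_or_lt_of_le hap with h1 | h1
    · exact ⟨ψp, wp, hwp, hPp, fun e he => by
        rcases Finset.mem_insert.mp he with rfl | he
        exacts [h1.symm, hzp e he]⟩
    rcases eq_or_lt_of_le ham with h2 | h2
    · exact ⟨ψm, wm, hwm, hPm, fun e he => by
        rcases Finset.mem_insert.mp he with rfl | he
        exacts [h2, hzm e he]⟩
    have hΔ : 0 < ψp a - ψm a := by linarith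
    set α := (-ψm a) / (ψp a - ψm a) with hα
    set β := (ψp a) / (ψp a - ψm a) with hβ
    have hα0 : 0 ≤ α := div_nonneg (by linarith) hΔ.le
    have hβ0 : 0 ≤ β := div_nonneg h1.le hΔ.le
    have hαβ : α + β = 1 := by
      rw [hα, hβ, ← add_div, div_eq_one_iff_eq hΔ.ne']
      ring
    refine ⟨fun e => α * ψp e + β * ψm e, α * wp + β * wm, ?_,
      hconv _ _ _ _ _ _ hα0 hβ0 hαβ hPp hPm, fun e he => ?_⟩
    · calc w = α * w + β * w := by rw [← add_mul, hαβ, one_mul]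
        _ ≤ α * wp + β * wm := by gcongr
    · rcases Finset.mem_insert.mp he with rfl | he
      · show α * ψp _ + β * ψm _ = 0
        rw [hα, hβ]
        field_simp
        ring
      · show α * ψp e + β * ψm e = 0
        rw [hzp e he, hzm e he]; ring

end Aux

section Aux2

open Classical

lemma toSigned {V : Type*} (G : SimpleGraph V) [Fintype G.edgeSet] (ρ : Sym2 V → V × V)
    (c : Sym2 V → NNReal) (s t : V) (X : Set G.edgeSet) (d : G.edgeSet → Bool)
    (φ : G.edgeSet → ℝ) (w' : ℝ) (h : IsFlowOn G ρ c s t X d φ w') :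
    SFlow G ρ c s t (fun e => if d e = false then φ e else -φ e) w' := by
  obtain ⟨h0, hcap, hcons, hval⟩ := h
  have key := netOut_eq G ρ X d φ (fun e => if d e = false then φ e else -φ e)
    (fun e => rfl) h0
  refine ⟨fun e => ?_, fun v hvs hvt => ?_, ?_⟩
  · obtain ⟨hb1, hb2⟩ := hcap e
    have hc0 : (0 : ℝ) ≤ (c e.val : ℝ) := (c e.val).coe_nonneg
    dsimp only
    split_ifs <;> rw [abs_le] <;> constructor <;> linarith
  · rw [key v, hcons v hvs hvt, sub_self]
  · exact (key s).trans hval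

lemma ofSigned {V : Type*} (G : SimpleGraph V) [Fintype G.edgeSet] (ρ : Sym2 V → V × V)
    (c : Sym2 V → NNReal) (s t : V) (X : Set G.edgeSet)
    (ψ : G.edgeSet → ℝ) (w' : ℝ) (h : SFlow G ρ c s t ψ w')
    (h0 : ∀ e, e ∉ X → ψ e = 0) :
    IsFlowOn G ρ c s t X (fun e => decide (ψ e < 0)) (fun e => |ψ e|) w' := by
  obtain ⟨hcap, hcons, hval⟩ := h
  have hψ : ∀ e, ψ e = if (fun e => decide (ψ e < 0)) e = false then |ψ e| else -|ψ e| := by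
    intro e
    dsimp only
    by_cases he : ψ e < 0
    · simp [he, abs_of_neg he]
    · simp [he, abs_of_nonneg (not_lt.mp he)]
  have key := netOut_eq G ρ X (fun e => decide (ψ e < 0)) (fun e => |ψ e|) ψ hψ
    (fun e he => abs_eq_zero.mpr (h0 e he))
  refine ⟨fun e he => abs_eq_zero.mpr (h0 e he), fun e => ⟨abs_nonneg _, hcap e⟩,
    fun v hvs hvt => ?_, ?_⟩
  · have h3 := hcons v hvs hvt
    rw [key v] at h3
    linarith
  · exact (key s).symm.trans hval

lemma sum_head_congr {V : Type*} (G : SimpleGraph V) [Fintype G.edgeSet]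
    (X X' : Set G.edgeSet) (hX' : ∀ e, e ∈ X') (A B : G.edgeSet → V)
    (hAB : ∀ e ∈ X, A e = B e) (φ : G.edgeSet → ℝ) (h0 : ∀ e, e ∉ X → φ e = 0) (v : V) :
    (∑ e : G.edgeSet, if e ∈ X' ∧ A e = v then φ e else 0)
      = ∑ e : G.edgeSet, if e ∈ X ∧ B e = v then φ e else 0 := by
  refine Finset.sum_congr rfl fun e _ => ?_
  by_cases hX : e ∈ X
  · rw [hAB e hX]
    simp [hX, hX' e]
  · simp [h0 e hX, hX]

/-- Extending a flow on `X` to the orientation of all edges, provided the full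
orientation agrees with `d` on `X`. -/
lemma extendFlow {V : Type*} (G : SimpleGraph V) [Fintype G.edgeSet] (ρ : Sym2 V → V × V)
    (c : Sym2 V → NNReal) (s t : V) (X : Set G.edgeSet) (d h : G.edgeSet → Bool)
    (hdh : ∀ e ∈ X, h e = d e) (φ : G.edgeSet → ℝ) (w' : ℝ)
    (hf : IsFlowOn G ρ c s t X d φ w') :
    IsFlowOn G ρ c s t Set.univ h φ w' := by
  obtain ⟨h0, hcap, hcons, hval⟩ := hf
  have htail := fun v => sum_head_congr G X Set.univ (fun e => Set.mem_univ e)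
    (etail ρ h) (etail ρ d) (fun e he => by unfold etail; rw [hdh e he]) φ h0 v
  have hhead := fun v => sum_head_congr G X Set.univ (fun e => Set.mem_univ e)
    (ehead ρ h) (ehead ρ d) (fun e he => by unfold ehead; rw [hdh e he]) φ h0 v
  exact ⟨fun e he => absurd (Set.mem_univ e) he, hcap,
    fun v hvs hvt => (hhead v).trans ((hcons v hvs hvt).trans (htail v).symm),
    by rw [htail s, hhead s]; exact hval⟩

end Aux2

/-- if `G` admits an `s`-`t` flow of size at least `w` and `e_w` is the
minimum number of edges of a subgraph admitting an `s`-`t` flow of size at least `w`,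
then `dvc(𝕊_w) = vc(𝕊_w) = m − e_w` for the system `𝕊_w` of orientations of `G`
admitting an `s`-`t` flow of size at least `w`. -/
theorem vc_dvc_flow {V : Type*} [Fintype V] (G : SimpleGraph V) [Fintype G.edgeSet]
    (ρ : Sym2 V → V × V) (hρ : ∀ e ∈ G.edgeSet, Function.uncurry Sym2.mk (ρ e) = e)
    (c : Sym2 V → NNReal) (s t : V) (w : ℝ) (m ew : ℕ)
    (hm : Nat.card G.edgeSet = m)
    (hG : ∃ d : G.edgeSet → Bool, AdmitsFlow G ρ c s t Set.univ d w)
    (hew_mem : ∃ (X : Set G.edgeSet) (d : G.edgeSet → Bool),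
      AdmitsFlow G ρ c s t X d w ∧ X.ncard = ew)
    (hew_min : ∀ (X : Set G.edgeSet) (d : G.edgeSet → Bool),
      AdmitsFlow G ρ c s t X d w → ew ≤ X.ncard) :
    dvcNat {d : G.edgeSet → Bool | AdmitsFlow G ρ c s t Set.univ d w} = m - ew ∧
    vcNat {d : G.edgeSet → Bool | AdmitsFlow G ρ c s t Set.univ d w} = m - ew := by
  classical
  set S : Set (G.edgeSet → Bool) := {d | AdmitsFlow G ρ c s t Set.univ d w} with hSdef
  -- Upper bound: any shattered set has size at most m - ew
  have boundA : ∀ Y : Set G.edgeSet, Shatters S Y → Y.ncard ≤ m - ew := by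
    intro Y hY
    have hyp : ∀ σ : G.edgeSet → Bool, ∃ ψ w', w ≤ w' ∧ SFlow G ρ c s t ψ w' ∧
        ∀ e ∈ Y.toFinite.toFinset, if σ e then ψ e ≤ 0 else 0 ≤ ψ e := by
      intro σ
      obtain ⟨h, hhS, hagree⟩ := hY σ
      obtain ⟨φ, w', hw, hfl⟩ := hhS
      refine ⟨fun e => if h e = false then φ e else -φ e, w', hw,
        toSigned G ρ c s t Set.univ h φ w' hfl, fun e he => ?_⟩
      have heY : e ∈ Y := (Set.Finite.mem_toFinset _).mp he
      have hhe : h e = σ e := hagree heY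
      have hφ0 := (hfl.2.1 e).1
      cases hσ : σ e with
      | false =>
        simp only [hσ, Bool.false_eq_true, if_false]
        show (0 : ℝ) ≤ if h e = false then φ e else -φ e
        rw [hhe, hσ]
        simpa using hφ0
      | true =>
        simp only [hσ, if_true]
        show (if h e = false then φ e else -φ e) ≤ 0
        rw [hhe, hσ]
        simpa using hφ0
    obtain ⟨ψ, w', hw, hsf, hz⟩ := zeroing (E := G.edgeSet) w Y.toFinite.toFinset
      (fun ψ w' => SFlow G ρ c s t ψ w')
      (fun ψ1 w1 ψ2 w2 a b ha hb hab h1 h2 =>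
        sflow_convex G ρ c s t ψ1 ψ2 w1 w2 a b ha hb hab h1 h2)
      hyp
    have hfl2 := ofSigned G ρ c s t Yᶜ ψ w' hsf
      (fun e he => hz e ((Set.Finite.mem_toFinset _).mpr (Set.notMem_compl_iff.mp he)))
    have h5 : ew ≤ Yᶜ.ncard := hew_min Yᶜ _ ⟨_, w', hw, hfl2⟩
    have h6 := Set.ncard_add_ncard_compl Y
    omega
  -- Lower bound: a strongly shattered set of size m - ew
  obtain ⟨X, d, hXd, hXcard⟩ := hew_mem
  have hXc : Xᶜ.ncard = m - ew := by
    have h6 := Set.ncard_add_ncard_compl X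
    have h7 : X.ncard ≤ Nat.card G.edgeSet := by omega
    omega
  have hBmem : StronglyShatters S Xᶜ := by
    refine ⟨d, fun f => ⟨fun e => if e ∈ X then d e else f e, ?_, fun e he => if_neg he,
      fun e he => if_pos (Set.notMem_compl_iff.mp he)⟩⟩
    obtain ⟨φ, w', hw, hfl⟩ := hXd
    exact ⟨φ, w', hw, extendFlow G ρ c s t X d _ (fun e he => if_pos he) φ w' hfl⟩
  have hub : ∀ n ∈ {n | ∃ Y : Set G.edgeSet, Shatters S Y ∧ Y.ncard = n}, n ≤ m - ew := by
    rintro n ⟨Y, hY, rfl⟩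
    exact boundA Y hY
  have hsub : ∀ n ∈ {n | ∃ Y : Set G.edgeSet, StronglyShatters S Y ∧ Y.ncard = n},
      n ∈ {n | ∃ Y : Set G.edgeSet, Shatters S Y ∧ Y.ncard = n} := by
    rintro n ⟨Y, hY, rfl⟩
    obtain ⟨g, hg⟩ := hY
    exact ⟨Y, fun f => (hg f).imp (fun h ⟨h1, h2, _⟩ => ⟨h1, h2⟩), rfl⟩
  have hub' : ∀ n ∈ {n | ∃ Y : Set G.edgeSet, StronglyShatters S Y ∧ Y.ncard = n},
      n ≤ m - ew := fun n hn => hub n (hsub n hn)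
  constructor
  · unfold dvcNat
    exact le_antisymm (csSup_le' hub') (le_csSup ⟨m - ew, hub'⟩ ⟨Xᶜ, hBmem, hXc⟩)
  · unfold vcNat
    refine le_antisymm (csSup_le' hub) (le_csSup ⟨m - ew, hub⟩ ?_)
    exact hsub (m - ew) ⟨Xᶜ, hBmem, hXc⟩
end

section
/- Let G be a finite simple undirected graph with edge set E, let w : E → ℝ≥0 be a length function, let s, t be two vertices of G, and let d ∈ ℝ. Then the number of orientations f of G such that the digraph G⃗^f contains a directed path from s to t of total length at most d equals the number of edge subsets X ⊆ E such that G_X contains a path from s to t of total length at most d. -/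
/-- The list of consecutive arcs of the walk `u, p₀, p₁, …`. -/
def diArcsOf {V : Type*} (u : V) (p : List V) : List (V × V) :=
  (u :: p).zip p

/-- `u, p₀, p₁, …` is a directed path from `u` to `v` in the digraph `R`: consecutive
vertices are joined by arcs, the last vertex is `v`, and no vertex repeats. -/
def IsDiPath {V : Type*} (R : V → V → Prop) (u v : V) (p : List V) : Prop :=
  List.Chain R u p ∧ (u :: p).getLast (List.cons_ne_nil u p) = v ∧ (u :: p).Nodup

open scoped ENNReal

namespace D18

variable {V : Type*} (w : Sym2 V → NNReal)

noncomputable def wcost (u : V) (p : List V) : ℝ≥0∞ :=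
  ((diArcsOf u p).map fun a => ((w (Sym2.mk.uncurry a) : NNReal) : ℝ≥0∞)).sum

@[simp] lemma wcost_nil (u : V) : wcost w u [] = 0 := rfl

@[simp] lemma wcost_cons (u a : V) (p : List V) :
    wcost w u (a :: p) = (w (Sym2.mk.uncurry (u, a)) : ℝ≥0∞) + wcost w a p := by
  simp [wcost, diArcsOf]

lemma wcost_append (p₁ : List V) (x y : V) (p₂ : List V) :
    wcost w x (p₁ ++ y :: p₂) = wcost w x (p₁ ++ [y]) + wcost w y p₂ := by
  induction p₁ generalizing x with
  | nil => simp [add_assoc]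
  | cons a p₁ ih => simp [ih, add_assoc]

def Good (R : V → V → Prop) (δ : V → ℝ≥0∞) (B : ℝ≥0∞) (t : V) : Prop :=
  ∃ u p, List.Chain R u p ∧ (u :: p).getLast (List.cons_ne_nil u p) = t ∧
    δ u + wcost w u p ≤ B

lemma good_mono {R R' : V → V → Prop} {δ δ' : V → ℝ≥0∞} {B : ℝ≥0∞} {t : V}
    (hR : ∀ a b, R a b → R' a b) (hδ : ∀ x, δ' x ≤ δ x) :
    Good w R δ B t → Good w R' δ' B t := by
  rintro ⟨u, p, h1, h2, h3⟩
  exact ⟨u, p, List.IsChain.imp hR h1, h2, le_trans (add_le_add_left (hδ u) _) h3⟩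

lemma good_congr {R R' : V → V → Prop} {δ : V → ℝ≥0∞} {B : ℝ≥0∞} {t : V}
    (hR : ∀ a b, R a b ↔ R' a b) :
    Good w R δ B t ↔ Good w R' δ B t :=
  ⟨good_mono w (fun a b h => (hR a b).mp h) (fun _ => le_rfl),
   good_mono w (fun a b h => (hR a b).mpr h) (fun _ => le_rfl)⟩

lemma getLast_cons_cons (x a : V) (p : List V) :
    (x :: a :: p).getLast (List.cons_ne_nil _ _) = (a :: p).getLast (List.cons_ne_nil _ _) :=
  List.getLast_cons _

/-- Key decomposition: from a chain in `R`, either the whole chain avoids the special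
arcs `(u,v)`, `(v,u)`, or we may restart at `u` or `v` with controlled cost. -/
lemma chain_decomp {R R' : V → V → Prop} {u v : V} {δ δ'' : V → ℝ≥0∞}
    (hsplit : ∀ a b, R a b → R' a b ∨
      ((a, b) = (u, v) ∧ δ'' v ≤ δ u + (w (Sym2.mk.uncurry (u, v)) : ℝ≥0∞)) ∨
      ((a, b) = (v, u) ∧ δ'' u ≤ δ u)) :
    ∀ (p : List V) (x : V), List.Chain R x p →
      List.Chain R' x p ∨ ∃ y q, List.Chain R' y q ∧
        (y :: q).getLast (List.cons_ne_nil _ _) = (x :: p).getLast (List.cons_ne_nil _ _) ∧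
        p ≠ [] ∧ δ'' y + wcost w y q ≤ δ u + wcost w x p := by
  intro p
  induction p with
  | nil => intro x _; left; exact List.Chain.nil
  | cons a p' ih =>
    intro x hc
    rw [List.Chain, List.chain_cons] at hc
    obtain ⟨hxa, hc'⟩ := hc
    rcases hsplit _ _ hxa with h | ⟨h, hv⟩ | ⟨h, hu⟩
    · rcases ih a hc' with hL | ⟨y, q, h1, h2, _, h3⟩
      · left; exact List.chain_cons.mpr ⟨h, hL⟩
      · right
        refine ⟨y, q, h1, h2.trans (getLast_cons_cons x a p').symm, List.cons_ne_nil _ _, ?_⟩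
        refine h3.trans ?_
        rw [wcost_cons]
        exact add_le_add_right le_add_self _
    · injection h with hx ha
      subst hx; subst ha
      rcases ih a hc' with hL | ⟨y, q, h1, h2, _, h3⟩
      · right
        refine ⟨a, p', hL, (getLast_cons_cons x a p').symm, List.cons_ne_nil _ _, ?_⟩
        rw [wcost_cons, ← add_assoc]
        exact add_le_add_left hv _
      · right
        refine ⟨y, q, h1, h2.trans (getLast_cons_cons x a p').symm, List.cons_ne_nil _ _, ?_⟩
        refine h3.trans ?_
        rw [wcost_cons]
        exact add_le_add_right le_add_self _
    · injection h with hx ha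
      subst hx; subst ha
      rcases ih a hc' with hL | ⟨y, q, h1, h2, _, h3⟩
      · right
        refine ⟨a, p', hL, (getLast_cons_cons x a p').symm, List.cons_ne_nil _ _, ?_⟩
        rw [wcost_cons]
        exact add_le_add hu le_add_self
      · right
        refine ⟨y, q, h1, h2.trans (getLast_cons_cons x a p').symm, List.cons_ne_nil _ _, ?_⟩
        refine h3.trans ?_
        rw [wcost_cons]
        exact add_le_add_right le_add_self _

lemma good_forward {R R' : V → V → Prop} {u v : V} {δ δ'' : V → ℝ≥0∞} {B : ℝ≥0∞} {t : V}
    (hsplit : ∀ a b, R a b → R' a b ∨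
      ((a, b) = (u, v) ∧ δ'' v ≤ δ u + (w (Sym2.mk.uncurry (u, v)) : ℝ≥0∞)) ∨
      ((a, b) = (v, u) ∧ δ'' u ≤ δ u))
    (hδ : ∀ x, δ'' x ≤ δ x) (hmin : ∀ a b, R a b → δ u ≤ δ a) :
    Good w R δ B t → Good w R' δ'' B t := by
  rintro ⟨x, p, hc, hl, hcost⟩
  rcases chain_decomp w hsplit p x hc with hL | ⟨y, q, h1, h2, hne, h3⟩
  · exact ⟨x, p, hL, hl, le_trans (add_le_add_left (hδ x) _) hcost⟩
  · refine ⟨y, q, h1, h2.trans hl, h3.trans (le_trans ?_ hcost)⟩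
    cases p with
    | nil => exact absurd rfl hne
    | cons a p' =>
      have hx : δ u ≤ δ x := hmin x a (List.chain_cons.mp hc).1
      exact add_le_add_left hx _

lemma good_backward {R R' : V → V → Prop} {u v : V} {δ : V → ℝ≥0∞} {B : ℝ≥0∞} {t : V}
    [DecidableEq V]
    (hR : ∀ a b, R' a b → R a b) (huv : R u v) :
    Good w R' (fun x => if x = v then min (δ v) (δ u + (w (Sym2.mk.uncurry (u, v)) : ℝ≥0∞)) else δ x)
      B t → Good w R δ B t := by
  rintro ⟨x, p, hc, hl, hcost⟩
  by_cases hxv : x = v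
  · subst hxv
    beta_reduce at hcost
    rw [if_pos rfl] at hcost
    rcases min_cases (δ x) (δ u + (w (Sym2.mk.uncurry (u, x)) : ℝ≥0∞)) with ⟨hmin, _⟩ | ⟨hmin, _⟩
    · exact ⟨x, p, List.IsChain.imp hR hc, hl, by rw [hmin] at hcost; exact hcost⟩
    · refine ⟨u, x :: p, List.chain_cons.mpr ⟨huv, List.IsChain.imp hR hc⟩,
        (getLast_cons_cons u x p).trans hl, ?_⟩
      rw [wcost_cons, ← add_assoc, ← hmin]
      exact hcost
  · refine ⟨x, p, List.IsChain.imp hR hc, hl, ?_⟩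
    beta_reduce at hcost
    rwa [if_neg hxv] at hcost



lemma chain_suffix {R : V → V → Prop} :
    ∀ (p₁ : List V) {x y : V} {p₂ : List V}, List.Chain R x (p₁ ++ y :: p₂) →
      List.Chain R y p₂ := by
  intro p₁
  induction p₁ with
  | nil => intro x y p₂ h; exact (List.chain_cons.mp h).2
  | cons a p₁ ih => intro x y p₂ h; exact ih (List.chain_cons.mp h).2

lemma getLast_mid (x y : V) (p₁ p₂ : List V) :
    (x :: (p₁ ++ y :: p₂)).getLast (List.cons_ne_nil _ _) =
      (y :: p₂).getLast (List.cons_ne_nil _ _) := by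
  have h : x :: (p₁ ++ y :: p₂) = (x :: p₁) ++ (y :: p₂) := by simp
  rw [List.getLast_congr _ (by simp : (x :: p₁) ++ (y :: p₂) ≠ []) h, List.getLast_append]
  simp

/-- Any walk can be de-duplicated into a walk with no repeated vertices, without
increasing the cost. -/
lemma exists_nodup_walk {R : V → V → Prop} {t : V} :
    ∀ (n : ℕ) (p : List V) (x : V), p.length ≤ n →
      List.Chain R x p → (x :: p).getLast (List.cons_ne_nil _ _) = t →
      ∃ q, List.Chain R x q ∧ (x :: q).getLast (List.cons_ne_nil _ _) = t ∧
        (x :: q).Nodup ∧ wcost w x q ≤ wcost w x p ∧ q ⊆ p := by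
  intro n
  induction n with
  | zero =>
    intro p x hlen hc hl
    rw [List.length_eq_zero_iff.mp (Nat.le_zero.mp hlen)] at hc hl ⊢
    exact ⟨[], hc, hl, by simp, le_rfl, by simp⟩
  | succ n ih =>
    intro p x hlen hc hl
    by_cases hx : x ∈ p
    · obtain ⟨p₁, p₂, rfl⟩ := List.append_of_mem hx
      have hc₂ : List.Chain R x p₂ := chain_suffix p₁ hc
      have hl₂ : (x :: p₂).getLast (List.cons_ne_nil _ _) = t := by
        rw [← getLast_mid x x p₁ p₂]; exact hl
      have hlen₂ : p₂.length ≤ n := by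
        simp only [List.length_append, List.length_cons] at hlen; omega
      obtain ⟨q, h1, h2, h3, h4, h5⟩ := ih p₂ x hlen₂ hc₂ hl₂
      refine ⟨q, h1, h2, h3, h4.trans ?_, fun a ha => by simp [h5 ha]⟩
      rw [wcost_append]
      exact le_add_self
    · cases p with
      | nil => exact ⟨[], hc, hl, by simp, le_rfl, by simp⟩
      | cons a p' =>
        obtain ⟨hxa, hc'⟩ := List.chain_cons.mp hc
        have hl' : (a :: p').getLast (List.cons_ne_nil _ _) = t := by
          rw [← getLast_cons_cons x a p']; exact hl
        have hlen' : p'.length ≤ n := by simp at hlen; omega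
        obtain ⟨q', h1, h2, h3, h4, h5⟩ := ih p' a hlen' hc' hl'
        refine ⟨a :: q', List.chain_cons.mpr ⟨hxa, h1⟩,
          (getLast_cons_cons x a q').trans h2, ?_, ?_, ?_⟩
        · refine List.nodup_cons.mpr ⟨?_, h3⟩
          intro hmem
          rcases List.mem_cons.mp hmem with rfl | hmem'
          · exact hx (List.mem_cons_self)
          · exact hx (List.mem_cons.mpr (Or.inr (h5 hmem')))
        · rw [wcost_cons, wcost_cons]
          exact add_le_add_right h4 _
        · exact List.cons_subset_cons a h5


section Counting

variable {ι : Type*} [Finite ι]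

lemma bool_ne_iff_eq_not {c b : Bool} : ¬ c = b ↔ c = !b := by
  cases b <;> cases c <;> simp

lemma card_split (e : ι) (P : (ι → Bool) → Prop) (b : Bool) :
    Nat.card {f : ι → Bool // P f} =
      Nat.card {f : ι → Bool // P f ∧ f e = b} +
        Nat.card {f : ι → Bool // P f ∧ f e = !b} := by
  classical
  have E : {f : ι → Bool // P f} ≃
      {f : ι → Bool // P f ∧ f e = b} ⊕ {f : ι → Bool // P f ∧ f e = !b} := by
    refine Equiv.trans (Equiv.sumCompl (fun x : {f : ι → Bool // P f} => x.1 e = b)).symm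
      (Equiv.sumCongr (Equiv.subtypeSubtypeEquivSubtypeInter P (fun f => f e = b)) ?_)
    exact Equiv.trans (Equiv.subtypeSubtypeEquivSubtypeInter P (fun f => ¬ f e = b))
      (Equiv.subtypeEquiv (Equiv.refl _)
        (fun f => and_congr_right fun _ => bool_ne_iff_eq_not))
  rw [Nat.card_congr E, Nat.card_sum]

lemma card_half [DecidableEq ι] (e : ι) (P : (ι → Bool) → Prop)
    (hP : ∀ f b', P (Function.update f e b') ↔ P f) (b : Bool) :
    Nat.card {f : ι → Bool // P f} = 2 * Nat.card {f : ι → Bool // P f ∧ f e = b} := by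
  classical
  rw [card_split e P b, two_mul]
  congr 1
  apply Nat.card_congr
  refine ⟨fun x => ⟨Function.update x.1 e b, (hP _ _).mpr x.2.1, by simp⟩,
    fun x => ⟨Function.update x.1 e (!b), (hP _ _).mpr x.2.1, by simp⟩, ?_, ?_⟩
  · rintro ⟨f, hf, hfe⟩
    apply Subtype.ext
    simp only [Function.update_idem]
    rw [← hfe, Function.update_eq_self]
  · rintro ⟨f, hf, hfe⟩
    apply Subtype.ext
    simp only [Function.update_idem]
    rw [← hfe, Function.update_eq_self]

end Counting


section Graph

variable {V : Type*} (G : SimpleGraph V) (ρ : Sym2 V → V × V)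

def Ror (S : Finset G.edgeSet) (f : G.edgeSet → Bool) : V → V → Prop := fun a b =>
  ∃ e ∈ S, (f e = false ∧ ρ e.val = (a, b)) ∨ (f e = true ∧ ρ e.val = (b, a))

def Rsub (S : Finset G.edgeSet) (g : G.edgeSet → Bool) : V → V → Prop := fun a b =>
  ∃ e ∈ S, g e = true ∧ (ρ e.val = (a, b) ∨ ρ e.val = (b, a))

lemma main_count [Fintype V]
    (hρ : ∀ e ∈ G.edgeSet, Sym2.mk.uncurry (ρ e) = e) (w : Sym2 V → NNReal) (t : V)
    (S : Finset G.edgeSet) :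
    ∀ (δ : V → ℝ≥0∞) (B : ℝ≥0∞),
      Nat.card {f : G.edgeSet → Bool // Good w (Ror G ρ S f) δ B t} =
      Nat.card {g : G.edgeSet → Bool // Good w (Rsub G ρ S g) δ B t} := by
  classical
  induction S using Finset.strongInduction with
  | _ S ih =>
  intro δ B
  rcases S.eq_empty_or_nonempty with rfl | ⟨e0, he0⟩
  · apply Nat.card_congr
    refine Equiv.subtypeEquiv (Equiv.refl _) fun f => ?_
    exact good_congr w (fun a b => by simp [Ror, Rsub])
  -- choose a minimal endpoint u and an edge e = {u, v} realizing it
  set T : Finset V := S.image (fun e => (ρ e.val).1) ∪ S.image (fun e => (ρ e.val).2)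
    with hT
  have hTne : T.Nonempty :=
    ⟨(ρ e0.val).1, Finset.mem_union_left _ (Finset.mem_image_of_mem _ he0)⟩
  obtain ⟨u, huT, hmin⟩ := T.exists_min_image δ hTne
  have hexe : ∃ e ∈ S, (ρ e.val).1 = u ∨ (ρ e.val).2 = u := by
    rcases Finset.mem_union.mp huT with h | h
    · obtain ⟨e, he, hh⟩ := Finset.mem_image.mp h; exact ⟨e, he, Or.inl hh⟩
    · obtain ⟨e, he, hh⟩ := Finset.mem_image.mp h; exact ⟨e, he, Or.inr hh⟩
  obtain ⟨e, he, hend⟩ := hexe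
  set v : V := if (ρ e.val).1 = u then (ρ e.val).2 else (ρ e.val).1 with hv
  have hcase : ρ e.val = (u, v) ∨ ρ e.val = (v, u) := by
    by_cases h1 : (ρ e.val).1 = u
    · left
      have h2 : v = (ρ e.val).2 := by rw [hv, if_pos h1]
      calc ρ e.val = ((ρ e.val).1, (ρ e.val).2) := rfl
        _ = (u, v) := by rw [h1, h2]
    · right
      rcases hend with h | h
      · exact absurd h h1
      · have h2 : v = (ρ e.val).1 := by rw [hv, if_neg h1]
        calc ρ e.val = ((ρ e.val).1, (ρ e.val).2) := rfl
          _ = (v, u) := by rw [h, h2]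
  have hmk : Sym2.mk.uncurry (u, v) = e.val := by
    rcases hcase with h | h
    · rw [← h]; exact hρ e.val e.2
    · rw [← hρ e.val e.2, h]; exact Sym2.eq_swap
  have hne : u ≠ v := by
    intro h
    have hd := G.not_isDiag_of_mem_edgeSet e.2
    rw [← hmk] at hd
    exact hd (Sym2.mk_isDiag_iff.mpr h)
  set δ' : V → ℝ≥0∞ :=
    fun x => if x = v then min (δ v) (δ u + (w (Sym2.mk.uncurry (u, v)) : ℝ≥0∞)) else δ x with hδ'
  have hδ'le : ∀ x, δ' x ≤ δ x := by
    intro x; rw [hδ']; dsimp only; split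
    · next hxv => rw [hxv]; exact min_le_left _ _
    · exact le_rfl
  have hδ'u : δ' u = δ u := by rw [hδ']; simp [hne]
  have hδ'v : δ' v ≤ δ u + (w (Sym2.mk.uncurry (u, v)) : ℝ≥0∞) := by
    rw [hδ']; simp
  -- minimality facts
  have hstepT : ∀ e' : G.edgeSet, e' ∈ S → ∀ a c : V,
      (ρ e'.val = (a, c) ∨ ρ e'.val = (c, a)) → δ u ≤ δ a := by
    intro e' he' a c h
    apply hmin
    rcases h with h | h
    · exact Finset.mem_union_left _ (Finset.mem_image.mpr ⟨e', he', by rw [h]⟩)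
    · exact Finset.mem_union_right _ (Finset.mem_image.mpr ⟨e', he', by rw [h]⟩)
  have hmin_or : ∀ (f : G.edgeSet → Bool) a c, Ror G ρ S f a c → δ u ≤ δ a := by
    rintro f a c ⟨e', he', h⟩
    rcases h with ⟨_, h⟩ | ⟨_, h⟩
    · exact hstepT e' he' a c (Or.inl h)
    · exact hstepT e' he' a c (Or.inr h)
  have hmin_sub : ∀ (g : G.edgeSet → Bool) a c, Rsub G ρ S g a c → δ u ≤ δ a := by
    rintro g a c ⟨e', he', _, h⟩; exact hstepT e' he' a c h
  set b₀ : Bool := if ρ e.val = (u, v) then false else true with hb₀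
  have hnvu : ρ e.val = (v, u) → ¬ ρ e.val = (u, v) := by
    intro h hh
    rw [h] at hh
    injection hh with h1 _
    exact hne h1.symm
  have harc₀ : ∀ f : G.edgeSet → Bool, f e = b₀ → Ror G ρ S f u v := by
    intro f hf
    rcases hcase with h | h
    · exact ⟨e, he, Or.inl ⟨by rw [hf, hb₀, if_pos h], h⟩⟩
    · exact ⟨e, he, Or.inr ⟨by rw [hf, hb₀, if_neg (hnvu h)], h⟩⟩
  have harc_sub : ∀ g : G.edgeSet → Bool, g e = true → Rsub G ρ S g u v :=
    fun g hg => ⟨e, he, hg, hcase⟩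
  have herase_or : ∀ (f : G.edgeSet → Bool) a c,
      Ror G ρ (S.erase e) f a c → Ror G ρ S f a c := by
    rintro f a c ⟨e', he', h⟩; exact ⟨e', Finset.mem_of_mem_erase he', h⟩
  have herase_sub : ∀ (g : G.edgeSet → Bool) a c,
      Rsub G ρ (S.erase e) g a c → Rsub G ρ S g a c := by
    rintro g a c ⟨e', he', h⟩; exact ⟨e', Finset.mem_of_mem_erase he', h⟩
  -- split lemmas
  have hsplit_or₀ : ∀ f : G.edgeSet → Bool, f e = b₀ → ∀ a c, Ror G ρ S f a c →
      Ror G ρ (S.erase e) f a c ∨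
      ((a, c) = (u, v) ∧ δ' v ≤ δ u + (w (Sym2.mk.uncurry (u, v)) : ℝ≥0∞)) ∨
      ((a, c) = (v, u) ∧ δ' u ≤ δ u) := by
    rintro f hf a c ⟨e', he', h⟩
    by_cases hee : e' = e
    · subst hee
      right; left
      refine ⟨?_, hδ'v⟩
      rcases hcase with hρe | hρe
      · have hfe : f e' = false := by rw [hf, hb₀, if_pos hρe]
        rcases h with ⟨_, h2⟩ | ⟨h1, _⟩
        · exact h2.symm.trans hρe
        · rw [hfe] at h1; exact absurd h1 (by simp)
      · have hfe : f e' = true := by rw [hf, hb₀, if_neg (hnvu hρe)]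
        rcases h with ⟨h1, _⟩ | ⟨_, h2⟩
        · rw [hfe] at h1; exact absurd h1 (by simp)
        · injection h2.symm.trans hρe with hc1 hc2
          rw [hc1, hc2]
    · exact Or.inl ⟨e', Finset.mem_erase.mpr ⟨hee, he'⟩, h⟩
  have hsplit_or₁ : ∀ f : G.edgeSet → Bool, f e = !b₀ → ∀ a c, Ror G ρ S f a c →
      Ror G ρ (S.erase e) f a c ∨
      ((a, c) = (u, v) ∧ δ v ≤ δ u + (w (Sym2.mk.uncurry (u, v)) : ℝ≥0∞)) ∨
      ((a, c) = (v, u) ∧ δ u ≤ δ u) := by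
    rintro f hf a c ⟨e', he', h⟩
    by_cases hee : e' = e
    · subst hee
      right; right
      refine ⟨?_, le_rfl⟩
      rcases hcase with hρe | hρe
      · have hfe : f e' = true := by rw [hf, hb₀, if_pos hρe]; rfl
        rcases h with ⟨h1, _⟩ | ⟨_, h2⟩
        · rw [hfe] at h1; exact absurd h1 (by simp)
        · injection h2.symm.trans hρe with hc1 hc2
          rw [hc1, hc2]
      · have hfe : f e' = false := by rw [hf, hb₀, if_neg (hnvu hρe)]; rfl
        rcases h with ⟨_, h2⟩ | ⟨h1, _⟩
        · exact h2.symm.trans hρe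
        · rw [hfe] at h1; exact absurd h1 (by simp)
    · exact Or.inl ⟨e', Finset.mem_erase.mpr ⟨hee, he'⟩, h⟩
  have hsplit_sub₁ : ∀ g : G.edgeSet → Bool, ∀ a c, Rsub G ρ S g a c →
      Rsub G ρ (S.erase e) g a c ∨
      ((a, c) = (u, v) ∧ δ' v ≤ δ u + (w (Sym2.mk.uncurry (u, v)) : ℝ≥0∞)) ∨
      ((a, c) = (v, u) ∧ δ' u ≤ δ u) := by
    rintro g a c ⟨e', he', hg, h⟩
    by_cases hee : e' = e
    · subst hee
      right
      rcases hcase with hρe | hρe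
      · rcases h with h2 | h2
        · exact Or.inl ⟨h2.symm.trans hρe, hδ'v⟩
        · injection h2.symm.trans hρe with hc1 hc2
          right; refine ⟨?_, hδ'u.le⟩; rw [hc1, hc2]
      · rcases h with h2 | h2
        · injection h2.symm.trans hρe with hc1 hc2
          right; refine ⟨?_, hδ'u.le⟩; rw [hc1, hc2]
        · injection h2.symm.trans hρe with hc1 hc2
          left; refine ⟨?_, hδ'v⟩; rw [hc1, hc2]
    · exact Or.inl ⟨e', Finset.mem_erase.mpr ⟨hee, he'⟩, hg, h⟩
  have hsub₀ : ∀ g : G.edgeSet → Bool, g e = false → ∀ a c,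
      Rsub G ρ S g a c ↔ Rsub G ρ (S.erase e) g a c := by
    intro g hg a c
    constructor
    · rintro ⟨e', he', hX, h⟩
      by_cases hee : e' = e
      · subst hee; rw [hg] at hX; exact absurd hX (by simp)
      · exact ⟨e', Finset.mem_erase.mpr ⟨hee, he'⟩, hX, h⟩
    · exact herase_sub g a c
  -- the four Good-equivalences
  have Ior₀ : ∀ f, f e = b₀ →
      (Good w (Ror G ρ S f) δ B t ↔ Good w (Ror G ρ (S.erase e) f) δ' B t) := by
    intro f hf
    constructor
    · exact good_forward w (hsplit_or₀ f hf) hδ'le (hmin_or f)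
    · intro h
      rw [hδ'] at h
      exact good_backward w (herase_or f) (harc₀ f hf) h
  have Ior₁ : ∀ f, f e = !b₀ →
      (Good w (Ror G ρ S f) δ B t ↔ Good w (Ror G ρ (S.erase e) f) δ B t) :=
    fun f hf => ⟨good_forward w (hsplit_or₁ f hf) (fun _ => le_rfl) (hmin_or f),
      good_mono w (herase_or f) (fun _ => le_rfl)⟩
  have Isub₁ : ∀ g, g e = true →
      (Good w (Rsub G ρ S g) δ B t ↔ Good w (Rsub G ρ (S.erase e) g) δ' B t) := by
    intro g hg
    constructor
    · exact good_forward w (hsplit_sub₁ g) hδ'le (hmin_sub g)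
    · intro h
      rw [hδ'] at h
      exact good_backward w (herase_sub g) (harc_sub g hg) h
  have Isub₀ : ∀ g, g e = false →
      (Good w (Rsub G ρ S g) δ B t ↔ Good w (Rsub G ρ (S.erase e) g) δ B t) :=
    fun g hg => good_congr w (hsub₀ g hg)
  -- coordinate independence
  have indep_or : ∀ (δ₀ : V → ℝ≥0∞) (f : G.edgeSet → Bool) (b' : Bool),
      Good w (Ror G ρ (S.erase e) (Function.update f e b')) δ₀ B t ↔
      Good w (Ror G ρ (S.erase e) f) δ₀ B t := by
    intro δ₀ f b'
    apply good_congr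
    intro a c
    constructor <;> rintro ⟨e', he', h⟩ <;> refine ⟨e', he', ?_⟩ <;>
      [rw [Function.update_of_ne (Finset.ne_of_mem_erase he')] at h;
       rw [Function.update_of_ne (Finset.ne_of_mem_erase he')]] <;> exact h
  have indep_sub : ∀ (δ₀ : V → ℝ≥0∞) (g : G.edgeSet → Bool) (b' : Bool),
      Good w (Rsub G ρ (S.erase e) (Function.update g e b')) δ₀ B t ↔
      Good w (Rsub G ρ (S.erase e) g) δ₀ B t := by
    intro δ₀ g b'
    apply good_congr
    intro a c
    constructor <;> rintro ⟨e', he', h⟩ <;> refine ⟨e', he', ?_⟩ <;>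
      [rw [Function.update_of_ne (Finset.ne_of_mem_erase he')] at h;
       rw [Function.update_of_ne (Finset.ne_of_mem_erase he')]] <;> exact h
  -- counting
  have hSS : S.erase e ⊂ S := Finset.erase_ssubset he
  have step1 : Nat.card {f : G.edgeSet → Bool //
        Good w (Ror G ρ (S.erase e) f) δ' B t ∧ f e = b₀}
      = Nat.card {g : G.edgeSet → Bool //
        Good w (Rsub G ρ (S.erase e) g) δ' B t ∧ g e = true} := by
    have h1 := card_half e (fun f => Good w (Ror G ρ (S.erase e) f) δ' B t)
      (indep_or δ') b₀
    have h2 := card_half e (fun g => Good w (Rsub G ρ (S.erase e) g) δ' B t)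
      (indep_sub δ') true
    have h3 := ih (S.erase e) hSS δ' B
    rw [h1, h2] at h3
    exact Nat.eq_of_mul_eq_mul_left (by norm_num) h3
  have step2 : Nat.card {f : G.edgeSet → Bool //
        Good w (Ror G ρ (S.erase e) f) δ B t ∧ f e = !b₀}
      = Nat.card {g : G.edgeSet → Bool //
        Good w (Rsub G ρ (S.erase e) g) δ B t ∧ g e = false} := by
    have h1 := card_half e (fun f => Good w (Ror G ρ (S.erase e) f) δ B t)
      (indep_or δ) (!b₀)
    have h2 := card_half e (fun g => Good w (Rsub G ρ (S.erase e) g) δ B t)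
      (indep_sub δ) false
    have h3 := ih (S.erase e) hSS δ B
    rw [h1, h2] at h3
    exact Nat.eq_of_mul_eq_mul_left (by norm_num) h3
  calc Nat.card {f : G.edgeSet → Bool // Good w (Ror G ρ S f) δ B t}
      = Nat.card {f : G.edgeSet → Bool // Good w (Ror G ρ S f) δ B t ∧ f e = b₀} +
        Nat.card {f : G.edgeSet → Bool // Good w (Ror G ρ S f) δ B t ∧ f e = !b₀} :=
        card_split e _ b₀
    _ = Nat.card {f : G.edgeSet → Bool //
          Good w (Ror G ρ (S.erase e) f) δ' B t ∧ f e = b₀} +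
        Nat.card {f : G.edgeSet → Bool //
          Good w (Ror G ρ (S.erase e) f) δ B t ∧ f e = !b₀} := by
        congr 1 <;> apply Nat.card_congr <;>
          refine Equiv.subtypeEquiv (Equiv.refl _) fun f => ?_
        · exact and_congr_left fun hf => Ior₀ f hf
        · exact and_congr_left fun hf => Ior₁ f hf
    _ = Nat.card {g : G.edgeSet → Bool //
          Good w (Rsub G ρ (S.erase e) g) δ' B t ∧ g e = true} +
        Nat.card {g : G.edgeSet → Bool //
          Good w (Rsub G ρ (S.erase e) g) δ B t ∧ g e = false} := by
        rw [step1, step2]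
    _ = Nat.card {g : G.edgeSet → Bool // Good w (Rsub G ρ S g) δ B t ∧ g e = true} +
        Nat.card {g : G.edgeSet → Bool // Good w (Rsub G ρ S g) δ B t ∧ g e = false} := by
        congr 1 <;> apply Nat.card_congr <;>
          refine Equiv.subtypeEquiv (Equiv.refl _) fun g => ?_
        · exact (and_congr_left fun hg => Isub₁ g hg).symm
        · exact (and_congr_left fun hg => Isub₀ g hg).symm
    _ = Nat.card {g : G.edgeSet → Bool // Good w (Rsub G ρ S g) δ B t} := by
        rw [card_split e (fun g => Good w (Rsub G ρ S g) δ B t) true]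
        rfl

end Graph

section Endgame

variable {V : Type*} (G : SimpleGraph V) (ρ : Sym2 V → V × V)

@[simp] lemma diArcsOf_nil (x : V) : diArcsOf x ([] : List V) = [] := rfl

@[simp] lemma diArcsOf_cons (x a : V) (p : List V) :
    diArcsOf x (a :: p) = (x, a) :: diArcsOf a p := rfl

variable (w : Sym2 V → NNReal)

lemma list_sum_enn (l : List (Sym2 V)) :
    (l.map fun e => ((w e : NNReal) : ℝ≥0∞)).sum = (((l.map w).sum : NNReal) : ℝ≥0∞) := by
  induction l with
  | nil => simp
  | cons a l ih => simp [ih]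

lemma list_sum_real (l : List (Sym2 V)) :
    (l.map fun e => ((w e : NNReal) : ℝ)).sum = (((l.map w).sum : NNReal) : ℝ) := by
  induction l with
  | nil => simp
  | cons a l ih => simp [ih]

lemma sum_le_iff {d : ℝ} (hd : 0 ≤ d) (l : List (Sym2 V)) :
    (l.map fun e => ((w e : NNReal) : ℝ≥0∞)).sum ≤ ENNReal.ofReal d ↔
    (l.map fun e => ((w e : NNReal) : ℝ)).sum ≤ d := by
  rw [list_sum_enn, list_sum_real, ENNReal.ofReal, ENNReal.coe_le_coe,
    Real.le_toNNReal_iff_coe_le hd]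

lemma wcost_eq (u : V) (p : List V) :
    wcost w u p = (((diArcsOf u p).map Sym2.mk.uncurry).map fun e => ((w e : NNReal) : ℝ≥0∞)).sum := by
  rw [List.map_map]; rfl

lemma real_cost_eq (u : V) (p : List V) :
    ((diArcsOf u p).map fun a => ((w (Sym2.mk.uncurry a)) : ℝ)).sum =
      (((diArcsOf u p).map Sym2.mk.uncurry).map fun e => ((w e : NNReal) : ℝ)).sum := by
  rw [List.map_map]; rfl

lemma sublist_sum_le {α : Type*} (f : α → ℝ) (hf : ∀ a, 0 ≤ f a) :
    ∀ {l₁ l₂ : List α}, List.Sublist l₁ l₂ → (l₁.map f).sum ≤ (l₂.map f).sum := by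
  intro l₁ l₂ h
  induction h with
  | slnil => exact le_rfl
  | cons a h ih =>
    simp only [List.map_cons, List.sum_cons]
    exact ih.trans (le_add_of_nonneg_left (hf a))
  | cons_cons a h ih =>
    simp only [List.map_cons, List.sum_cons]
    exact add_le_add_right ih _

lemma subset_sum_le {α : Type*} (f : α → ℝ) (hf : ∀ a, 0 ≤ f a) {l₁ l₂ : List α}
    (hn : l₁.Nodup) (hs : l₁ ⊆ l₂) : (l₁.map f).sum ≤ (l₂.map f).sum := by
  obtain ⟨l, hl, hsub⟩ := hn.subperm hs
  calc (l₁.map f).sum = (l.map f).sum := ((hl.map f).sum_eq).symm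
    _ ≤ _ := sublist_sum_le f hf hsub

open Classical in
noncomputable def boolSetEquiv (α : Type*) : (α → Bool) ≃ Set α where
  toFun g := {i | g i = true}
  invFun X i := if i ∈ X then true else false
  left_inv g := by
    funext i
    by_cases h : g i = true
    · simp [h]
    · simp only [Bool.not_eq_true] at h; simp [h]
  right_inv X := by ext i; simp

def sRel (X : Set G.edgeSet) : V → V → Prop := fun a b =>
  ∃ e : G.edgeSet, e ∈ X ∧ (ρ e.val = (a, b) ∨ ρ e.val = (b, a))

lemma pair_of_mk_eq {x y : V} {pr : V × V} (h : Sym2.mk.uncurry pr = Sym2.mk.uncurry (x, y)) :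
    pr = (x, y) ∨ pr = (y, x) := by
  obtain ⟨a, b⟩ := pr
  rw [Function.uncurry_apply_pair, Function.uncurry_apply_pair, Sym2.eq_iff] at h
  rcases h with ⟨rfl, rfl⟩ | ⟨rfl, rfl⟩
  · exact Or.inl rfl
  · exact Or.inr rfl

lemma chain_to_walk (hρ : ∀ e ∈ G.edgeSet, Sym2.mk.uncurry (ρ e) = e) (X : Set G.edgeSet) :
    ∀ (p : List V) (x : V), List.Chain (sRel G ρ X) x p →
      ∃ q : (subgraphOf G X).Walk x ((x :: p).getLast (List.cons_ne_nil _ _)),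
        q.edges = (diArcsOf x p).map Sym2.mk.uncurry := by
  intro p
  induction p with
  | nil => intro x _; exact ⟨SimpleGraph.Walk.nil, rfl⟩
  | cons a p' ih =>
    intro x hc
    obtain ⟨hxa, hc'⟩ := List.chain_cons.mp hc
    obtain ⟨q', hq'⟩ := ih a hc'
    obtain ⟨e, heX, hor⟩ := hxa
    have hval : e.val = Sym2.mk.uncurry (x, a) := by
      rcases hor with h | h
      · rw [← hρ e.val e.2, h]
      · rw [← hρ e.val e.2, h]; exact Sym2.eq_swap
    have hxa' : x ≠ a := by
      intro hh
      have hdd := G.not_isDiag_of_mem_edgeSet e.2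
      rw [hval] at hdd
      exact hdd (Sym2.mk_isDiag_iff.mpr hh)
    have hadj : (subgraphOf G X).Adj x a := by
      rw [subgraphOf, SimpleGraph.fromEdgeSet_adj]
      exact ⟨⟨e, heX, hval⟩, hxa'⟩
    rw [getLast_cons_cons]
    exact ⟨SimpleGraph.Walk.cons hadj q', by simp [hq']⟩

lemma walk_to_chain (hρ : ∀ e ∈ G.edgeSet, Sym2.mk.uncurry (ρ e) = e) (X : Set G.edgeSet)
    {x t : V} (q : (subgraphOf G X).Walk x t) :
    ∃ p : List V, List.Chain (sRel G ρ X) x p ∧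
      (x :: p).getLast (List.cons_ne_nil _ _) = t ∧
      (diArcsOf x p).map Sym2.mk.uncurry = q.edges := by
  induction q with
  | nil => exact ⟨[], List.Chain.nil, rfl, rfl⟩
  | @cons a b c hadj q' ih =>
    obtain ⟨p', h1, h2, h3⟩ := ih
    rw [subgraphOf, SimpleGraph.fromEdgeSet_adj] at hadj
    obtain ⟨⟨e, heX, hval⟩, _⟩ := hadj
    have hsr : sRel G ρ X a b := by
      refine ⟨e, heX, ?_⟩
      apply pair_of_mk_eq
      rw [hρ e.val e.2, hval]; rfl
    refine ⟨b :: p', List.chain_cons.mpr ⟨hsr, h1⟩, (getLast_cons_cons a b p').trans h2, ?_⟩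
    simp only [diArcsOf_cons, List.map_cons, SimpleGraph.Walk.edges_cons, h3, hval, Function.uncurry_apply_pair]

end Endgame

end D18

/-- for a length function `w` on the edges, the number of orientations of
`G` containing a directed path from `s` to `t` of total length at most `d` equals the
number of edge subsets `X` such that `G_X` contains a path from `s` to `t` of total
length at most `d`. -/
theorem distance_orientations_eq_subgraphs {V : Type*} [Fintype V] (G : SimpleGraph V)
    (ρ : Sym2 V → V × V) (hρ : ∀ e ∈ G.edgeSet, Sym2.mk.uncurry (ρ e) = e)
    (w : Sym2 V → NNReal) (s t : V) (d : ℝ) :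
    {f : G.edgeSet → Bool | ∃ p : List V, IsDiPath (arcs G ρ f) s t p ∧
        ((diArcsOf s p).map fun a => (w (Sym2.mk.uncurry a) : ℝ)).sum ≤ d}.ncard =
    {X : Set G.edgeSet | ∃ q : (subgraphOf G X).Walk s t, q.IsPath ∧
        (q.edges.map fun e => (w e : ℝ)).sum ≤ d}.ncard := by
  classical
  by_cases hd : 0 ≤ d
  · -- main case
    set B₀ : ℝ≥0∞ := ENNReal.ofReal d with hB₀def
    have hB₀ : B₀ ≠ ⊤ := ENNReal.ofReal_ne_top
    set δ₀ : V → ℝ≥0∞ := fun x => if x = s then 0 else ⊤ with hδ₀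
    haveI : Fintype ↥G.edgeSet := Fintype.ofFinite _
    have harcs : ∀ (f : G.edgeSet → Bool) (a b : V),
        arcs G ρ f a b ↔ D18.Ror G ρ Finset.univ f a b := by
      intro f a b
      constructor
      · rintro ⟨e, _, h⟩; exact ⟨e, Finset.mem_univ _, h⟩
      · rintro ⟨e, _, h⟩; exact ⟨e, Set.mem_univ _, h⟩
    have hδ₀s : δ₀ s = 0 := by rw [hδ₀]; simp
    have hstart : ∀ (x : V) (c : ℝ≥0∞), δ₀ x + c ≤ B₀ → x = s := by
      intro x c hx
      by_contra hxs
      rw [hδ₀] at hx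
      simp only [if_neg hxs, top_add] at hx
      exact hB₀ (top_le_iff.mp hx)
    have E1 : ∀ f : G.edgeSet → Bool,
        (∃ p : List V, IsDiPath (arcs G ρ f) s t p ∧
          ((diArcsOf s p).map fun a => (w (Sym2.mk.uncurry a) : ℝ)).sum ≤ d) ↔
        D18.Good w (D18.Ror G ρ Finset.univ f) δ₀ B₀ t := by
      intro f
      constructor
      · rintro ⟨p, ⟨hc, hl, _⟩, hsum⟩
        refine ⟨s, p, List.IsChain.imp (fun a b h => (harcs f a b).mp h) hc, hl, ?_⟩
        rw [hδ₀s, zero_add, D18.wcost_eq]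
        rw [D18.real_cost_eq] at hsum
        exact (D18.sum_le_iff w hd _).mpr hsum
      · rintro ⟨x, p, hc, hl, hcost⟩
        have hxs : x = s := hstart x _ hcost
        subst hxs
        rw [hδ₀s, zero_add] at hcost
        obtain ⟨q, h1, h2, h3, h4, _⟩ :=
          D18.exists_nodup_walk w p.length p x le_rfl hc hl
        refine ⟨q, ⟨List.IsChain.imp (fun a b h => (harcs f a b).mpr h) h1, h2, h3⟩, ?_⟩
        rw [D18.real_cost_eq]
        refine (D18.sum_le_iff w hd _).mp ?_
        rw [← D18.wcost_eq]
        exact h4.trans hcost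
    have hrsub : ∀ (g : G.edgeSet → Bool) (a b : V),
        D18.Rsub G ρ Finset.univ g a b ↔ D18.sRel G ρ {i | g i = true} a b := by
      intro g a b
      constructor
      · rintro ⟨e, _, hg, h⟩; exact ⟨e, hg, h⟩
      · rintro ⟨e, hg, h⟩; exact ⟨e, Finset.mem_univ _, hg, h⟩
    have E2 : ∀ g : G.edgeSet → Bool,
        D18.Good w (D18.Rsub G ρ Finset.univ g) δ₀ B₀ t ↔
        (∃ q : (subgraphOf G {i | g i = true}).Walk s t, q.IsPath ∧
          (q.edges.map fun e => (w e : ℝ)).sum ≤ d) := by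
      intro g
      constructor
      · rintro ⟨x, p, hc, hl, hcost⟩
        have hxs : x = s := hstart x _ hcost
        subst hxs
        rw [hδ₀s, zero_add] at hcost
        have hc' : List.Chain (D18.sRel G ρ {i | g i = true}) x p :=
          List.IsChain.imp (fun a b h => (hrsub g a b).mp h) hc
        have hq := D18.chain_to_walk G ρ hρ {i | g i = true} p x hc'
        rw [hl] at hq
        obtain ⟨q₀, hq₀⟩ := hq
        refine ⟨q₀.bypass, q₀.bypass_isPath, ?_⟩
        have hsub : (q₀.bypass.edges.map fun e => ((w e : NNReal) : ℝ)).sum ≤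
            (q₀.edges.map fun e => ((w e : NNReal) : ℝ)).sum :=
          D18.subset_sum_le _ (fun a => (w a).coe_nonneg)
            q₀.bypass_isPath.edges_nodup q₀.edges_bypass_subset
        refine hsub.trans ?_
        rw [hq₀]
        refine (D18.sum_le_iff w hd _).mp ?_
        rw [← D18.wcost_eq]
        exact hcost
      · rintro ⟨q, _, hsum⟩
        obtain ⟨p, h1, h2, h3⟩ := D18.walk_to_chain G ρ hρ {i | g i = true} q
        refine ⟨s, p, List.IsChain.imp (fun a b h => (hrsub g a b).mpr h) h1, h2, ?_⟩
        rw [hδ₀s, zero_add, D18.wcost_eq, h3]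
        exact (D18.sum_le_iff w hd _).mpr hsum
    rw [← Nat.card_coe_set_eq, ← Nat.card_coe_set_eq]
    calc Nat.card ↥{f : G.edgeSet → Bool | ∃ p : List V, IsDiPath (arcs G ρ f) s t p ∧
            ((diArcsOf s p).map fun a => (w (Sym2.mk.uncurry a) : ℝ)).sum ≤ d}
        = Nat.card {f : G.edgeSet → Bool //
            D18.Good w (D18.Ror G ρ Finset.univ f) δ₀ B₀ t} :=
          Nat.card_congr (Equiv.subtypeEquiv (Equiv.refl _) fun f => E1 f)
      _ = Nat.card {g : G.edgeSet → Bool //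
            D18.Good w (D18.Rsub G ρ Finset.univ g) δ₀ B₀ t} :=
          D18.main_count G ρ hρ w t Finset.univ δ₀ B₀
      _ = Nat.card ↥{X : Set G.edgeSet | ∃ q : (subgraphOf G X).Walk s t, q.IsPath ∧
            (q.edges.map fun e => (w e : ℝ)).sum ≤ d} := by
          apply Nat.card_congr
          exact Equiv.subtypeEquiv (D18.boolSetEquiv _) fun g => by exact E2 g
  · -- d < 0 : both sides empty
    have h1 : {f : G.edgeSet → Bool | ∃ p : List V, IsDiPath (arcs G ρ f) s t p ∧
        ((diArcsOf s p).map fun a => (w (Sym2.mk.uncurry a) : ℝ)).sum ≤ d} = ∅ := by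
      ext f
      simp only [Set.mem_setOf_eq, Set.mem_empty_iff_false, iff_false, not_exists]
      rintro p ⟨_, hsum⟩
      have h0 : 0 ≤ ((diArcsOf s p).map fun a => (w (Sym2.mk.uncurry a) : ℝ)).sum := by
        apply List.sum_nonneg
        intro x hx
        obtain ⟨a, _, rfl⟩ := List.mem_map.mp hx
        exact (w _).coe_nonneg
      linarith
    have h2 : {X : Set G.edgeSet | ∃ q : (subgraphOf G X).Walk s t, q.IsPath ∧
        (q.edges.map fun e => (w e : ℝ)).sum ≤ d} = ∅ := by
      ext X
      simp only [Set.mem_setOf_eq, Set.mem_empty_iff_false, iff_false, not_exists]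
      rintro q ⟨_, hsum⟩
      have h0 : 0 ≤ (q.edges.map fun e => (w e : ℝ)).sum := by
        apply List.sum_nonneg
        intro x hx
        obtain ⟨a, _, rfl⟩ := List.mem_map.mp hx
        exact (w _).coe_nonneg
      linarith
    rw [h1, h2, Set.ncard_empty, Set.ncard_empty]
end

section
/- Let G be a finite simple undirected graph with edge set E, let s be a vertex of G and W a set of vertices of G. Then the number of orientations d of G such that in the digraph G⃗^d every vertex w ∈ W is reachable from s by a directed path equals the number of edge subsets X ⊆ E such that all vertices of W ∪ {s} lie in a single connected component of G_X. -/
namespace McD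

open Relation

variable {V : Type*} {I : Type*}

theorem rtg_mono' {r r' : V → V → Prop} (h : ∀ x y, r x y → Relation.ReflTransGen r' x y)
    {a b : V} (hab : Relation.ReflTransGen r a b) : Relation.ReflTransGen r' a b := by
  induction hab with
  | refl => exact .refl
  | tail _ h2 ih => exact ih.trans (h _ _ h2)

theorem remove_intoS {r bad : V → V → Prop} {S : Set V}
    (hbad : ∀ u v, bad u v → v ∈ S) {w : V}
    (h : ∃ a ∈ S, Relation.ReflTransGen (fun u v => r u v ∨ bad u v) a w) :
    ∃ a ∈ S, Relation.ReflTransGen r a w := by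
  obtain ⟨a, ha, hw⟩ := h
  have aux : ∀ {x y : V}, Relation.ReflTransGen (fun u v => r u v ∨ bad u v) x y →
      (∃ b ∈ S, Relation.ReflTransGen r b y) ∨ Relation.ReflTransGen r x y := by
    intro x y hxy
    induction hxy with
    | refl => exact Or.inr .refl
    | tail _ h2 ih =>
      rcases h2 with h2 | h2
      · rcases ih with ⟨b, hb, hby⟩ | hxy'
        · exact Or.inl ⟨b, hb, hby.tail h2⟩
        · exact Or.inr (hxy'.tail h2)
      · exact Or.inl ⟨_, hbad _ _ h2, .refl⟩
  rcases aux hw with ⟨b, hb, hbw⟩ | h'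
  · exact ⟨b, hb, hbw⟩
  · exact ⟨a, ha, h'⟩

theorem contract_arc {r : V → V → Prop} {S : Set V} {a b : V} (ha : a ∈ S) {w : V} :
    (∃ x ∈ S, Relation.ReflTransGen (fun u v => r u v ∨ (u = a ∧ v = b)) x w) ↔
    (∃ x ∈ S ∪ {b}, Relation.ReflTransGen r x w) := by
  constructor
  · rintro ⟨x, hx, hxw⟩
    have aux : ∀ {p q : V}, Relation.ReflTransGen (fun u v => r u v ∨ (u = a ∧ v = b)) p q →
        Relation.ReflTransGen r p q ∨ Relation.ReflTransGen r b q := by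
      intro p q hpq
      induction hpq with
      | refl => exact Or.inl .refl
      | tail _ h2 ih =>
        rcases h2 with h2 | ⟨rfl, rfl⟩
        · rcases ih with h' | h'
          · exact Or.inl (h'.tail h2)
          · exact Or.inr (h'.tail h2)
        · exact Or.inr .refl
    rcases aux hxw with h' | h'
    · exact ⟨x, Or.inl hx, h'⟩
    · exact ⟨b, Or.inr rfl, h'⟩
  · rintro ⟨x, hx, hxw⟩
    have hxw' : Relation.ReflTransGen (fun u v => r u v ∨ (u = a ∧ v = b)) x w :=
      rtg_mono' (fun u v h => .single (Or.inl h)) hxw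
    rcases hx with hx | hx
    · exact ⟨x, hx, hxw'⟩
    · rcases hx with rfl
      exact ⟨a, ha, .head (Or.inr ⟨rfl, rfl⟩) hxw'⟩

/-! ### Abstract graph data -/

variable (ends : I → V × V) (W : Set V)

def arcR (F : Set I) (d : I → Bool) : V → V → Prop := fun u v =>
  ∃ i, i ∈ F ∧ ((d i = false ∧ ends i = (u, v)) ∨ (d i = true ∧ ends i = (v, u)))

def conR (S : Set V) (F : Set I) (X : Set I) : V → V → Prop := fun u v =>
  (∃ i, i ∈ F ∧ i ∈ X ∧ (ends i = (u, v) ∨ ends i = (v, u))) ∨ (u ∈ S ∧ v ∈ S)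

def GoodOr (S : Set V) (F : Set I) (d : I → Bool) : Prop :=
  ∀ w ∈ W, ∃ a ∈ S, Relation.ReflTransGen (arcR ends F d) a w

def GoodSub (S : Set V) (F : Set I) (X : Set I) : Prop :=
  ∀ w ∈ W, ∃ a ∈ S, Relation.ReflTransGen (conR ends S F X) a w

theorem arcR_split {F : Set I} {e : I} (he : e ∈ F) (d : I → Bool) :
    arcR ends F d = fun u v => arcR ends (F \ {e}) d u v ∨
      ((d e = false ∧ ends e = (u, v)) ∨ (d e = true ∧ ends e = (v, u))) := by
  funext u v
  apply propext
  constructor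
  · rintro ⟨i, hi, h⟩
    by_cases hie : i = e
    · subst hie; exact Or.inr h
    · exact Or.inl ⟨i, ⟨hi, hie⟩, h⟩
  · rintro (⟨i, hi, h⟩ | h)
    · exact ⟨i, hi.1, h⟩
    · exact ⟨e, he, h⟩

theorem goodOr_contract {F : Set I} {e : I} (he : e ∈ F) {S : Set V} {a b : V} (ha : a ∈ S)
    {d : I → Bool}
    (harc : ∀ u v : V, ((d e = false ∧ ends e = (u, v)) ∨ (d e = true ∧ ends e = (v, u))) ↔
      (u = a ∧ v = b)) :
    GoodOr ends W S F d ↔ GoodOr ends W (S ∪ {b}) (F \ {e}) d := by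
  have hrel : arcR ends F d = fun u v => arcR ends (F \ {e}) d u v ∨ (u = a ∧ v = b) := by
    rw [arcR_split ends he d]
    funext u v
    exact propext (or_congr_right (harc u v))
  unfold GoodOr
  refine forall₂_congr fun w hw => ?_
  rw [hrel, contract_arc ha]

theorem goodOr_delete {F : Set I} {e : I} (he : e ∈ F) {S : Set V}
    {d : I → Bool}
    (hbad : ∀ u v : V, ((d e = false ∧ ends e = (u, v)) ∨ (d e = true ∧ ends e = (v, u))) →
      v ∈ S) :
    GoodOr ends W S F d ↔ GoodOr ends W S (F \ {e}) d := by
  unfold GoodOr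
  refine forall₂_congr fun w hw => ⟨fun h => ?_, fun h => ?_⟩
  · refine remove_intoS (bad := fun u v =>
      ((d e = false ∧ ends e = (u, v)) ∨ (d e = true ∧ ends e = (v, u)))) hbad ?_
    rwa [arcR_split ends he d] at h
  · obtain ⟨x, hx, hxw⟩ := h
    refine ⟨x, hx, rtg_mono' (fun u v h' => .single ?_) hxw⟩
    obtain ⟨i, hi, h'⟩ := h'
    exact ⟨i, hi.1, h'⟩

theorem goodSub_erase {F : Set I} {e : I} {S : Set V} {X : Set I}
    (hS : ((ends e).1 ∈ S ∧ (ends e).2 ∈ S) ∨ e ∉ X) :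
    GoodSub ends W S F X ↔ GoodSub ends W S (F \ {e}) X := by
  unfold GoodSub
  refine forall₂_congr fun w hw => ⟨fun h => ?_, fun h => ?_⟩
  · obtain ⟨x, hx, hxw⟩ := h
    refine ⟨x, hx, rtg_mono' (fun u v h' => ?_) hxw⟩
    rcases h' with ⟨i, hiF, hiX, hi⟩ | hj
    · by_cases hie : i = e
      · subst hie
        rcases hS with ⟨h1, h2⟩ | hne
        · rcases hi with hi | hi <;> rw [hi] at h1 h2
          · exact .single (Or.inr ⟨h1, h2⟩)
          · exact .single (Or.inr ⟨h2, h1⟩)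
        · exact absurd hiX hne
      · exact .single (Or.inl ⟨i, ⟨hiF, hie⟩, hiX, hi⟩)
    · exact .single (Or.inr hj)
  · obtain ⟨x, hx, hxw⟩ := h
    refine ⟨x, hx, rtg_mono' (fun u v h' => .single ?_) hxw⟩
    rcases h' with ⟨i, hiF, hiX, hi⟩ | hj
    · exact Or.inl ⟨i, hiF.1, hiX, hi⟩
    · exact Or.inr hj

theorem goodSub_contract {F : Set I} {e : I} (he : e ∈ F) {S : Set V} {a b : V} (ha : a ∈ S)
    (hend : ends e = (a, b) ∨ ends e = (b, a)) {X : Set I} (heX : e ∈ X) :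
    GoodSub ends W S F X ↔ GoodSub ends W (S ∪ {b}) (F \ {e}) X := by
  have hab : conR ends S F X a b := Or.inl ⟨e, he, heX, by tauto⟩
  have hba : conR ends S F X b a := Or.inl ⟨e, he, heX, by tauto⟩
  unfold GoodSub
  refine forall₂_congr fun w hw => ⟨fun h => ?_, fun h => ?_⟩
  · obtain ⟨x, hx, hxw⟩ := h
    refine ⟨x, Or.inl hx, rtg_mono' (fun u v h' => ?_) hxw⟩
    rcases h' with ⟨i, hiF, hiX, hi⟩ | ⟨hu, hv⟩
    · by_cases hie : i = e
      · subst hie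
        refine .single (Or.inr ?_)
        rcases hend with h1 | h1 <;> rcases hi with h2 | h2 <;> rw [h1] at h2 <;>
          obtain ⟨hu', hv'⟩ := Prod.ext_iff.mp h2 <;> subst hu' <;> subst hv' <;>
          constructor <;> first | exact Or.inl ha | exact Or.inr rfl
      · exact .single (Or.inl ⟨i, ⟨hiF, hie⟩, hiX, hi⟩)
    · exact .single (Or.inr ⟨Or.inl hu, Or.inl hv⟩)
  · obtain ⟨x, hx, hxw⟩ := h
    have key : ∀ u v : V, conR ends (S ∪ {b}) (F \ {e}) X u v →
        Relation.ReflTransGen (conR ends S F X) u v := by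
      rintro u v (⟨i, hiF, hiX, hi⟩ | ⟨hu, hv⟩)
      · exact .single (Or.inl ⟨i, hiF.1, hiX, hi⟩)
      · have conn : ∀ p, p ∈ S ∪ {b} → Relation.ReflTransGen (conR ends S F X) p a := by
          rintro p (hp | hp)
          · exact .single (Or.inr ⟨hp, ha⟩)
          · rcases hp with rfl; exact .single hba
        have conn' : ∀ p, p ∈ S ∪ {b} → Relation.ReflTransGen (conR ends S F X) a p := by
          rintro p (hp | hp)
          · exact .single (Or.inr ⟨ha, hp⟩)
          · rcases hp with rfl; exact .single hab
        exact (conn u hu).trans (conn' v hv)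
    have hxw' := rtg_mono' key hxw
    rcases hx with hx | hx
    · exact ⟨x, hx, hxw'⟩
    · rcases hx with rfl
      exact ⟨a, ha, .head hab hxw'⟩

theorem goodSub_notmem {F : Set I} {e : I} (heF : e ∉ F) {S : Set V} {X Y : Set I}
    (hXY : ∀ i, i ≠ e → (i ∈ X ↔ i ∈ Y)) :
    GoodSub ends W S F X ↔ GoodSub ends W S F Y := by
  have : conR ends S F X = conR ends S F Y := by
    funext u v
    apply propext
    have : ∀ i, i ∈ F → (i ∈ X ↔ i ∈ Y) := fun i hi =>
      hXY i (fun h => heF (h ▸ hi))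
    constructor <;> rintro (⟨i, hiF, hiX, hi⟩ | hj)
    · exact Or.inl ⟨i, hiF, (this i hiF).mp hiX, hi⟩
    · exact Or.inr hj
    · exact Or.inl ⟨i, hiF, (this i hiF).mpr hiX, hi⟩
    · exact Or.inr hj
  unfold GoodSub; rw [this]

theorem goodOr_update {F : Set I} {e : I} (heF : e ∉ F) {S : Set V} (d : I → Bool) (b : Bool)
    [DecidableEq I] :
    GoodOr ends W S F (Function.update d e b) ↔ GoodOr ends W S F d := by
  have : arcR ends F (Function.update d e b) = arcR ends F d := by
    funext u v
    apply propext
    constructor <;> rintro ⟨i, hi, h⟩ <;> refine ⟨i, hi, ?_⟩ <;>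
      rw [Function.update_of_ne (fun h' : i = e => heF (h' ▸ hi))] at * <;> exact h
  unfold GoodOr; rw [this]

/-! ### Constant cases -/

theorem goodOr_const {F : Set I} {S : Set V}
    (h : ∀ i ∈ F, (ends i).1 ∉ S ∧ (ends i).2 ∉ S) (d : I → Bool) :
    GoodOr ends W S F d ↔ W ⊆ S := by
  constructor
  · intro hg w hw
    obtain ⟨a, ha, haw⟩ := hg w hw
    rcases haw.cases_head with rfl | ⟨c, hac, -⟩
    · exact ha
    · obtain ⟨i, hi, hcase⟩ := hac
      rcases hcase with ⟨-, h'⟩ | ⟨-, h'⟩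
      · exact absurd (show (ends i).1 ∈ S by rw [h']; exact ha) (h i hi).1
      · exact absurd (show (ends i).2 ∈ S by rw [h']; exact ha) (h i hi).2
  · intro hWS w hw
    exact ⟨w, hWS hw, .refl⟩

theorem goodSub_const {F : Set I} {S : Set V}
    (h : ∀ i ∈ F, (ends i).1 ∉ S ∧ (ends i).2 ∉ S) (X : Set I) :
    GoodSub ends W S F X ↔ W ⊆ S := by
  constructor
  · intro hg w hw
    obtain ⟨a, ha, haw⟩ := hg w hw
    have : ∀ y, Relation.ReflTransGen (conR ends S F X) a y → y ∈ S := by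
      intro y hy
      induction hy with
      | refl => exact ha
      | tail _ h2 ih =>
        rcases h2 with ⟨i, hiF, hiX, hi⟩ | ⟨-, hv⟩
        · rcases hi with h' | h'
          · exact absurd (show (ends i).1 ∈ S by rw [h']; exact ih) (h i hiF).1
          · exact absurd (show (ends i).2 ∈ S by rw [h']; exact ih) (h i hiF).2
        · exact hv
    exact this w haw
  · intro hWS w hw
    exact ⟨w, hWS hw, .refl⟩

/-! ### Counting lemmas -/

theorem card_or_split {α : Type*} [Finite α] (p q r : α → Prop)
    (h : ∀ x, r x ↔ (p x ∨ q x)) (hdisj : ∀ x, p x → q x → False) :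
    Nat.card {x // r x} = Nat.card {x // p x} + Nat.card {x // q x} := by
  classical
  have hd : Disjoint p q := by
    rw [Pi.disjoint_iff]
    intro x
    rw [disjoint_iff_inf_le]
    exact fun hx => hdisj x hx.1 hx.2
  rw [Nat.card_congr (Equiv.subtypeEquivRight h), Nat.card_congr (subtypeOrEquiv p q hd),
    Nat.card_sum]

theorem card_update_flip {I : Type*} [Finite I] [DecidableEq I] (e : I) (c : Bool)
    (P : (I → Bool) → Prop) (hP : ∀ d b, P (Function.update d e b) ↔ P d) :
    2 * Nat.card {d : I → Bool // d e = c ∧ P d} = Nat.card {d : I → Bool // P d} := by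
  have hinv : Function.Involutive (fun d : I → Bool => Function.update d e (! d e)) := by
    intro d
    simp only [Function.update_self, Bool.not_not, Function.update_idem,
      Function.update_eq_self]
  have hflip : {d : I → Bool // d e = c ∧ P d} ≃ {d : I → Bool // d e = !c ∧ P d} :=
    Equiv.subtypeEquiv hinv.toPerm (fun d => by
      simp only [Function.Involutive.coe_toPerm]
      cases c <;> cases hde : d e <;> simp [hde, Function.update_self, hP])
  have hsplit : Nat.card {d : I → Bool // P d} =
      Nat.card {d : I → Bool // d e = c ∧ P d} + Nat.card {d : I → Bool // d e = !c ∧ P d} := by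
    refine card_or_split _ _ _ (fun d => ?_) (fun d h1 h2 => ?_)
    · cases c <;> cases hde : d e <;> simp [hde]
    · rw [h1.1] at h2
      cases c <;> simp at h2
  rw [hsplit, ← Nat.card_congr hflip, two_mul]

theorem card_mem_flip {I : Type*} [Finite I] (e : I)
    (Q : Set I → Prop) (hQ : ∀ X, Q (symmDiff X {e}) ↔ Q X) :
    2 * Nat.card {X : Set I // e ∈ X ∧ Q X} = Nat.card {X : Set I // Q X} ∧
    2 * Nat.card {X : Set I // e ∉ X ∧ Q X} = Nat.card {X : Set I // Q X} := by
  have hinv : Function.Involutive (fun X : Set I => symmDiff X {e}) := fun X => by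
    simpa using symmDiff_symmDiff_cancel_right ({e} : Set I) X
  have hflip : {X : Set I // e ∈ X ∧ Q X} ≃ {X : Set I // e ∉ X ∧ Q X} :=
    Equiv.subtypeEquiv hinv.toPerm (fun X => by
      simp only [Function.Involutive.coe_toPerm]
      simp [Set.mem_symmDiff, hQ])
  have hsplit : Nat.card {X : Set I // Q X} =
      Nat.card {X : Set I // e ∈ X ∧ Q X} + Nat.card {X : Set I // e ∉ X ∧ Q X} := by
    refine card_or_split _ _ _ (fun X => by tauto) (fun X h1 h2 => h2.1 h1.1)
  constructor
  · rw [hsplit, Nat.card_congr hflip, two_mul]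
  · rw [hsplit, ← Nat.card_congr hflip, two_mul]

/-! ### The two step lemmas for an edge with exactly one endpoint in `S` -/

theorem goodOr_step {F : Set I} {e : I} (he : e ∈ F) {S : Set V} {a b : V}
    (ha : a ∈ S) {c : Bool} (hend : ends e = if c then (b, a) else (a, b)) (d : I → Bool) :
    GoodOr ends W S F d ↔
      ((d e = c ∧ GoodOr ends W (S ∪ {b}) (F \ {e}) d) ∨
       (d e = !c ∧ GoodOr ends W S (F \ {e}) d)) := by
  by_cases hde : d e = c
  · have hcon : GoodOr ends W S F d ↔ GoodOr ends W (S ∪ {b}) (F \ {e}) d := by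
      refine goodOr_contract ends W he ha fun u v => ?_
      constructor
      · rintro (⟨hd, h⟩ | ⟨hd, h⟩)
        · have hc : c = false := by rw [← hde, hd]
          rw [hc] at hend; simp only [Bool.false_eq_true, if_false] at hend
          rw [hend] at h
          obtain ⟨h1, h2⟩ := Prod.ext_iff.mp h
          exact ⟨h1.symm, h2.symm⟩
        · have hc : c = true := by rw [← hde, hd]
          rw [hc] at hend; simp only [if_true] at hend
          rw [hend] at h
          obtain ⟨h1, h2⟩ := Prod.ext_iff.mp h
          exact ⟨h2.symm, h1.symm⟩
      · rintro ⟨rfl, rfl⟩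
        cases c
        · simp only [Bool.false_eq_true, if_false] at hend
          exact Or.inl ⟨hde, hend⟩
        · simp only [if_true] at hend
          exact Or.inr ⟨hde, hend⟩
    rw [hcon]
    have : d e = !c → False := by rw [hde]; cases c <;> simp
    tauto
  · have hde' : d e = !c := by cases c <;> cases h : d e <;> simp_all
    have hdel : GoodOr ends W S F d ↔ GoodOr ends W S (F \ {e}) d := by
      refine goodOr_delete ends W he fun u v h => ?_
      rcases h with ⟨hd, h⟩ | ⟨hd, h⟩
      · have hc : c = true := by rw [hde'] at hd; cases c <;> simp_all
        rw [hc] at hend; simp only [if_true] at hend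
        rw [hend] at h
        obtain ⟨h1, h2⟩ := Prod.ext_iff.mp h
        have hva : a = v := h2
        exact hva ▸ ha
      · have hc : c = false := by rw [hde'] at hd; cases c <;> simp_all
        rw [hc] at hend; simp only [Bool.false_eq_true, if_false] at hend
        rw [hend] at h
        obtain ⟨h1, h2⟩ := Prod.ext_iff.mp h
        have hva : a = v := h1
        exact hva ▸ ha
    rw [hdel]
    tauto

theorem goodSub_step {F : Set I} {e : I} (he : e ∈ F) {S : Set V} {a b : V}
    (ha : a ∈ S) {c : Bool} (hend : ends e = if c then (b, a) else (a, b)) (X : Set I) :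
    GoodSub ends W S F X ↔
      ((e ∈ X ∧ GoodSub ends W (S ∪ {b}) (F \ {e}) X) ∨
       (e ∉ X ∧ GoodSub ends W S (F \ {e}) X)) := by
  have hend' : ends e = (a, b) ∨ ends e = (b, a) := by
    cases c
    · simp only [Bool.false_eq_true, if_false] at hend; exact Or.inl hend
    · simp only [if_true] at hend; exact Or.inr hend
  by_cases heX : e ∈ X
  · rw [goodSub_contract ends W he ha hend' heX]
    tauto
  · rw [goodSub_erase ends W (Or.inr heX)]
    tauto

/-! ### The main abstract counting theorem -/

theorem abstract_card [Fintype I] [DecidableEq I] (ends : I → V × V) (W : Set V) :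
    ∀ (F : Finset I) (S : Set V),
      Nat.card {d : I → Bool // GoodOr ends W S ↑F d} =
      Nat.card {X : Set I // GoodSub ends W S ↑F X} := by
  intro F
  induction F using Finset.strongInduction with
  | _ F IH =>
  intro S
  by_cases hex : ∃ e ∈ F, (ends e).1 ∈ S ∨ (ends e).2 ∈ S
  · obtain ⟨e, heF, hends⟩ := hex
    have heF' : e ∈ (↑F : Set I) := heF
    have hss : F.erase e ⊂ F := Finset.erase_ssubset heF
    have hcoe : ((F.erase e : Finset I) : Set I) = ↑F \ {e} := Finset.coe_erase e F
    by_cases hboth : (ends e).1 ∈ S ∧ (ends e).2 ∈ S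
    · have h1 : ∀ d : I → Bool, GoodOr ends W S ↑F d ↔ GoodOr ends W S (↑F \ {e}) d := by
        intro d
        refine goodOr_delete ends W heF' fun u v h => ?_
        rcases h with ⟨-, h⟩ | ⟨-, h⟩
        · have := hboth.2; rw [h] at this; exact this
        · have := hboth.1; rw [h] at this; exact this
      have h2 : ∀ X : Set I, GoodSub ends W S ↑F X ↔ GoodSub ends W S (↑F \ {e}) X := fun X =>
        goodSub_erase ends W (Or.inl hboth)
      rw [Nat.card_congr (Equiv.subtypeEquivRight h1),
        Nat.card_congr (Equiv.subtypeEquivRight h2), ← hcoe]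
      exact IH _ hss S
    · obtain ⟨a, b, c, ha, hb, hend⟩ :
          ∃ (a b : V) (c : Bool), a ∈ S ∧ b ∉ S ∧ ends e = if c then (b, a) else (a, b) := by
        rcases hends with h1 | h2
        · exact ⟨(ends e).1, (ends e).2, false, h1, fun hc => hboth ⟨h1, hc⟩, by simp⟩
        · exact ⟨(ends e).2, (ends e).1, true, h2, fun hc => hboth ⟨hc, h2⟩, by simp⟩
      have henotin : e ∉ (↑F \ {e} : Set I) := by simp
      -- independence of the two reduced predicates from the edge e
      have hupdA : ∀ (d : I → Bool) (b' : Bool),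
          GoodOr ends W (S ∪ {b}) (↑F \ {e}) (Function.update d e b') ↔
          GoodOr ends W (S ∪ {b}) (↑F \ {e}) d := fun d b' =>
        goodOr_update ends W henotin d b'
      have hupdB : ∀ (d : I → Bool) (b' : Bool),
          GoodOr ends W S (↑F \ {e}) (Function.update d e b') ↔
          GoodOr ends W S (↑F \ {e}) d := fun d b' =>
        goodOr_update ends W henotin d b'
      have hsymA : ∀ X : Set I,
          GoodSub ends W (S ∪ {b}) (↑F \ {e}) (symmDiff X {e}) ↔
          GoodSub ends W (S ∪ {b}) (↑F \ {e}) X := fun X =>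
        goodSub_notmem ends W henotin (fun i hi => by simp [Set.mem_symmDiff, hi])
      have hsymB : ∀ X : Set I,
          GoodSub ends W S (↑F \ {e}) (symmDiff X {e}) ↔
          GoodSub ends W S (↑F \ {e}) X := fun X =>
        goodSub_notmem ends W henotin (fun i hi => by simp [Set.mem_symmDiff, hi])
      -- split the orientation count
      have hsplitOr : Nat.card {d : I → Bool // GoodOr ends W S ↑F d} =
          Nat.card {d : I → Bool // d e = c ∧ GoodOr ends W (S ∪ {b}) (↑F \ {e}) d} +
          Nat.card {d : I → Bool // d e = !c ∧ GoodOr ends W S (↑F \ {e}) d} := by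
        refine card_or_split _ _ _ (goodOr_step ends W heF' ha hend) fun d h1 h2 => ?_
        rw [h1.1] at h2
        cases c <;> simp at h2
      have hsplitSub : Nat.card {X : Set I // GoodSub ends W S ↑F X} =
          Nat.card {X : Set I // e ∈ X ∧ GoodSub ends W (S ∪ {b}) (↑F \ {e}) X} +
          Nat.card {X : Set I // e ∉ X ∧ GoodSub ends W S (↑F \ {e}) X} := by
        refine card_or_split _ _ _ (goodSub_step ends W heF' ha hend) fun X h1 h2 => h2.1 h1.1
      have hOrA := card_update_flip e c (fun d => GoodOr ends W (S ∪ {b}) (↑F \ {e}) d) hupdA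
      have hOrB := card_update_flip e (!c) (fun d => GoodOr ends W S (↑F \ {e}) d) hupdB
      have hSubA := (card_mem_flip e (fun X => GoodSub ends W (S ∪ {b}) (↑F \ {e}) X) hsymA).1
      have hSubB := (card_mem_flip e (fun X => GoodSub ends W S (↑F \ {e}) X) hsymB).2
      have hIHA : Nat.card {d : I → Bool // GoodOr ends W (S ∪ {b}) (↑F \ {e}) d} =
          Nat.card {X : Set I // GoodSub ends W (S ∪ {b}) (↑F \ {e}) X} := by
        rw [← hcoe]; exact IH _ hss (S ∪ {b})
      have hIHB : Nat.card {d : I → Bool // GoodOr ends W S (↑F \ {e}) d} =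
          Nat.card {X : Set I // GoodSub ends W S (↑F \ {e}) X} := by
        rw [← hcoe]; exact IH _ hss S
      beta_reduce at hOrA hOrB hSubA hSubB
      rw [hsplitOr, hsplitSub]
      linarith
  · push_neg at hex
    have hconst : ∀ i ∈ (↑F : Set I), (ends i).1 ∉ S ∧ (ends i).2 ∉ S := fun i hi => hex i hi
    by_cases hWS : W ⊆ S
    · rw [Nat.card_congr (Equiv.subtypeUnivEquiv
          (fun d => (goodOr_const ends W hconst d).mpr hWS)),
        Nat.card_congr (Equiv.subtypeUnivEquiv
          (fun X => (goodSub_const ends W hconst X).mpr hWS))]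
      rw [Nat.card_eq_fintype_card, Nat.card_eq_fintype_card, Fintype.card_set,
        Fintype.card_fun, Fintype.card_bool]
    · have h1 : IsEmpty {d : I → Bool // GoodOr ends W S ↑F d} :=
        ⟨fun ⟨d, hd⟩ => hWS ((goodOr_const ends W hconst d).mp hd)⟩
      have h2 : IsEmpty {X : Set I // GoodSub ends W S ↑F X} :=
        ⟨fun ⟨X, hX⟩ => hWS ((goodSub_const ends W hconst X).mp hX)⟩
      rw [Nat.card_of_isEmpty, Nat.card_of_isEmpty]

end McD

/-- the number of orientations of `G` in which every vertex of `W` is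
reachable from `s` by a directed path equals the number of edge subsets `X` such that
all vertices of `W ∪ {s}` lie in a single connected component of `G_X`. -/
theorem rooted_orientations_eq_connected_subgraphs {V : Type*} [Fintype V]
    (G : SimpleGraph V) (ρ : Sym2 V → V × V)
    (hρ : ∀ e ∈ G.edgeSet, Sym2.mk.uncurry (ρ e) = e) (s : V) (W : Set V) :
    {d : G.edgeSet → Bool | ∀ w ∈ W, Relation.ReflTransGen (arcs G ρ d) s w}.ncard =
    {X : Set G.edgeSet | ∀ u ∈ W ∪ {s}, ∀ v ∈ W ∪ {s},
        (subgraphOf G X).Reachable u v}.ncard := by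
  classical
  haveI : Fintype ↥G.edgeSet := Fintype.ofFinite _
  set ends : G.edgeSet → V × V := fun i => ρ i.val with hends
  have harc : ∀ d : G.edgeSet → Bool,
      arcs G ρ d = McD.arcR ends (↑(Finset.univ : Finset G.edgeSet)) d := by
    intro d
    funext u v
    apply propext
    simp [arcs, arcsOn, McD.arcR, hends]
  have hne_of : ∀ (i : G.edgeSet) (u v : V), ends i = (u, v) → u ≠ v := by
    intro i u v h hi
    have hd := G.not_isDiag_of_mem_edgeSet i.2
    have h1 := hρ _ i.2
    rw [show ρ i.val = (u, v) from h] at h1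
    subst hi
    exact hd (h1 ▸ Sym2.mk_isDiag_iff.mpr rfl)
  have adj_iff : ∀ (X : Set G.edgeSet) (u v : V), (subgraphOf G X).Adj u v ↔
      (u ≠ v ∧ ∃ i : G.edgeSet, i ∈ X ∧ (ends i = (u, v) ∨ ends i = (v, u))) := by
    intro X u v
    rw [subgraphOf, SimpleGraph.fromEdgeSet_adj]
    constructor
    · rintro ⟨hmem, hne⟩
      obtain ⟨i, hiX, hival⟩ := hmem
      refine ⟨hne, i, hiX, ?_⟩
      have h1 : Sym2.mk.uncurry (ρ i.val) = i.val := hρ _ i.2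
      obtain ⟨x, y, hxy⟩ : ∃ x y, ρ i.val = (x, y) := ⟨(ρ i.val).1, (ρ i.val).2, rfl⟩
      rw [hxy] at h1
      rw [hival] at h1
      rcases Sym2.eq_iff.mp h1 with ⟨rfl, rfl⟩ | ⟨rfl, rfl⟩
      · exact Or.inl hxy
      · exact Or.inr hxy
    · rintro ⟨hne, i, hiX, h⟩
      refine ⟨⟨i, hiX, ?_⟩, hne⟩
      have h1 : Sym2.mk.uncurry (ρ i.val) = i.val := hρ _ i.2
      rcases h with h | h
      · rw [show ρ i.val = (u, v) from h] at h1
        exact h1.symm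
      · rw [show ρ i.val = (v, u) from h] at h1
        exact h1.symm.trans Sym2.eq_swap
  have hL : ∀ d : G.edgeSet → Bool,
      (∀ w ∈ W, Relation.ReflTransGen (arcs G ρ d) s w) ↔
      McD.GoodOr ends W {s} (↑(Finset.univ : Finset G.edgeSet)) d := by
    intro d
    constructor
    · intro h w hw
      refine ⟨s, rfl, ?_⟩
      rw [← harc d]
      exact h w hw
    · intro h w hw
      obtain ⟨a, ha, haw⟩ := h w hw
      have has : a = s := ha
      rw [has] at haw
      rw [harc d]
      exact haw
  have hR : ∀ X : Set G.edgeSet,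
      (∀ u ∈ W ∪ {s}, ∀ v ∈ W ∪ {s}, (subgraphOf G X).Reachable u v) ↔
      McD.GoodSub ends W {s} (↑(Finset.univ : Finset G.edgeSet)) X := by
    intro X
    constructor
    · intro h w hw
      refine ⟨s, rfl, ?_⟩
      have hr : (subgraphOf G X).Reachable s w := h s (Or.inr rfl) w (Or.inl hw)
      rw [SimpleGraph.reachable_iff_reflTransGen] at hr
      refine McD.rtg_mono' (fun u v huv => .single ?_) hr
      obtain ⟨hne, i, hiX, hi⟩ := (adj_iff X u v).mp huv
      exact Or.inl ⟨i, by simp, hiX, hi⟩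
    · intro h
      have key : ∀ x ∈ W ∪ {s}, (subgraphOf G X).Reachable s x := by
        rintro x (hx | hx)
        · obtain ⟨a, ha, hax⟩ := h x hx
          have has : a = s := ha
          rw [has] at hax
          rw [SimpleGraph.reachable_iff_reflTransGen]
          refine McD.rtg_mono' (fun u v huv => ?_) hax
          rcases huv with ⟨i, hiF, hiX, hi⟩ | ⟨hu, hv⟩
          · refine Relation.ReflTransGen.single ((adj_iff X u v).mpr ⟨?_, i, hiX, hi⟩)
            rcases hi with hi | hi
            · exact hne_of i u v hi
            · exact (hne_of i v u hi).symm
          · have h1 : u = s := hu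
            have h2 : v = s := hv
            subst h1; subst h2
            exact Relation.ReflTransGen.refl
        · have hxs : x = s := hx
          rw [hxs]
      intro u hu v hv
      exact (key u hu).symm.trans (key v hv)
  rw [← Nat.card_coe_set_eq, ← Nat.card_coe_set_eq]
  exact Eq.trans (Nat.card_congr (Equiv.subtypeEquivRight hL))
    (Eq.trans (McD.abstract_card ends W Finset.univ {s})
      (Nat.card_congr (Equiv.subtypeEquivRight hR)).symm)
end
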